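/- arXiv:1412.5828 — 6 statements merged into one kernel-verified Lean document; each statement's English description precedes it below -/
import Mathlib

section
/- Let X ⊂ ℝⁿ be a non-empty bounded convex open set with the Hilbert metric d. Then (X, d) is a metric space: d is nonnegative, symmetric, vanishes exactly on the diagonal, and satisfies the triangle inequality. -/
open Real

section Aux

variable {n : ℕ} {X : Set (EuclideanSpace ℝ (Fin n))}

lemma chord_exists' (hconv : Convex ℝ X) (hopen : IsOpen X) (hbdd : Bornology.IsBounded X)
    {x y : EuclideanSpace ℝ (Fin n)} (hx : x ∈ X) (hy : y ∈ X) (hxy : x ≠ y) :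
    ∃ a b : ℝ, a < 0 ∧ 1 < b ∧ ∀ t : ℝ, x + t • (y - x) ∈ X ↔ a < t ∧ t < b := by
  set v := y - x with hv
  have hv0 : v ≠ 0 := sub_ne_zero.2 hxy.symm
  set s : Set ℝ := {t | x + t • v ∈ X} with hs
  have h0 : (0:ℝ) ∈ s := by simpa [hs] using hx
  have h1 : (1:ℝ) ∈ s := by
    simp only [hs, Set.mem_setOf_eq, one_smul, hv]
    simpa using hy
  have hne : s.Nonempty := ⟨0, h0⟩
  have hsopen : IsOpen s := by
    have : Continuous fun t : ℝ => x + t • v := by continuity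
    exact hopen.preimage this
  have hsconv : Convex ℝ s := by
    intro t1 h1' t2 h2' α β hα hβ hαβ
    have : x + (α * t1 + β * t2) • v = α • (x + t1 • v) + β • (x + t2 • v) := by
      have hx1 : α • x + β • x = x := by rw [← add_smul, hαβ, one_smul]
      rw [smul_add, smul_add, smul_smul, smul_smul, add_add_add_comm, hx1, ← add_smul]
    show x + (α • t1 + β • t2) • v ∈ X
    rw [smul_eq_mul, smul_eq_mul, this]
    exact hconv h1' h2' hα hβ hαβ
  obtain ⟨C, hC⟩ := isBounded_iff_forall_norm_le.1 hbdd
  have hsbdd : ∀ t ∈ s, |t| ≤ (C + ‖x‖) / ‖v‖ := by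
    intro t ht
    have h1 : ‖x + t • v‖ ≤ C := hC _ ht
    have h2 : ‖t • v‖ ≤ ‖x + t • v‖ + ‖x‖ := by
      have h3 := norm_sub_le (x + t • v) x
      simp only [add_sub_cancel_left] at h3
      linarith
    rw [norm_smul, Real.norm_eq_abs] at h2
    have hvpos : 0 < ‖v‖ := norm_pos_iff.2 hv0
    rw [le_div_iff₀ hvpos]
    nlinarith
  have hbddA : BddAbove s := ⟨(C + ‖x‖) / ‖v‖, fun t ht => (le_abs_self t).trans (hsbdd t ht)⟩
  have hbddB : BddBelow s := ⟨-((C + ‖x‖) / ‖v‖), fun t ht => by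
    have := (hsbdd t ht); have := neg_abs_le t; linarith⟩
  set a := sInf s
  set b := sSup s
  have hmemlt : ∀ t ∈ s, a < t ∧ t < b := by
    intro t ht
    obtain ⟨ε, hε, hball⟩ := Metric.isOpen_iff.1 hsopen t ht
    constructor
    · have h' : t - ε/2 ∈ s := hball (by
        simp only [Metric.mem_ball, Real.dist_eq]
        rw [show t - ε/2 - t = -(ε/2) by ring, abs_neg, abs_of_pos] <;> linarith)
      calc a ≤ t - ε/2 := csInf_le hbddB h'
        _ < t := by linarith
    · have h' : t + ε/2 ∈ s := hball (by
        simp only [Metric.mem_ball, Real.dist_eq]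
        rw [show t + ε/2 - t = ε/2 by ring, abs_of_pos] <;> linarith)
      calc t < t + ε/2 := by linarith
        _ ≤ b := le_csSup hbddA h'
  refine ⟨a, b, (hmemlt 0 h0).1, (hmemlt 1 h1).2, fun t => ⟨hmemlt t, ?_⟩⟩
  rintro ⟨hat, htb⟩
  obtain ⟨u, hu, hut⟩ := exists_lt_of_csInf_lt hne hat
  obtain ⟨w, hw, htw⟩ := exists_lt_of_lt_csSup hne htb
  exact hsconv.ordConnected.out hu hw ⟨hut.le, htw.le⟩

lemma chord_full' (hconv : Convex ℝ X) (hopen : IsOpen X) (hbdd : Bornology.IsBounded X)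
    {x y : EuclideanSpace ℝ (Fin n)} (hx : x ∈ X) (hy : y ∈ X) (hxy : x ≠ y) :
    ∃ a b : ℝ, a < 0 ∧ 1 < b ∧
      (∀ t : ℝ, x + t • (y - x) ∈ X ↔ a < t ∧ t < b) ∧
      x + a • (y - x) ∈ frontier X ∧ x + b • (y - x) ∈ frontier X ∧
      x ∈ segment ℝ (x + a • (y - x)) y ∧ y ∈ segment ℝ x (x + b • (y - x)) ∧
      dist x (x + b • (y - x)) = b * ‖y - x‖ ∧
      dist y (x + a • (y - x)) = (1 - a) * ‖y - x‖ ∧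
      dist x (x + a • (y - x)) = (-a) * ‖y - x‖ ∧
      dist y (x + b • (y - x)) = (b - 1) * ‖y - x‖ := by
  obtain ⟨a, b, ha, hb, hiff⟩ := chord_exists' hconv hopen hbdd hx hy hxy
  set v := y - x with hv
  have hab : a < b := by linarith
  have hcont : Continuous fun t : ℝ => x + t • v := by continuity
  -- frontier membership
  have hfr : ∀ c : ℝ, ¬ (a < c ∧ c < b) → x + c • v ∈ closure X → x + c • v ∈ frontier X := by
    intro c hc hcl
    rw [hopen.frontier_eq]
    exact ⟨hcl, fun hmem => hc ((hiff c).1 hmem)⟩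
  have hclA : x + a • v ∈ closure X := by
    have htend : Filter.Tendsto (fun t : ℝ => x + t • v) (nhdsWithin a (Set.Ioi a)) (nhds (x + a • v)) :=
      (hcont.tendsto a).mono_left nhdsWithin_le_nhds
    refine mem_closure_of_tendsto htend ?_
    filter_upwards [Ioo_mem_nhdsGT_of_mem (Set.mem_Ico.2 ⟨le_refl a, hab⟩)] with t ht
    exact (hiff t).2 ⟨ht.1, ht.2⟩
  have hclB : x + b • v ∈ closure X := by
    have htend : Filter.Tendsto (fun t : ℝ => x + t • v) (nhdsWithin b (Set.Iio b)) (nhds (x + b • v)) :=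
      (hcont.tendsto b).mono_left nhdsWithin_le_nhds
    refine mem_closure_of_tendsto htend ?_
    filter_upwards [Ioo_mem_nhdsLT_of_mem (Set.mem_Ioc.2 ⟨hab, le_refl b⟩)] with t ht
    exact (hiff t).2 ⟨ht.1, ht.2⟩
  have hfrA : x + a • v ∈ frontier X := hfr a (by intro h; linarith [h.1]) hclA
  have hfrB : x + b • v ∈ frontier X := hfr b (by intro h; linarith [h.2]) hclB
  -- segment memberships
  have hyx : y = x + v := by rw [hv]; abel
  have hsegx : x ∈ segment ℝ (x + a • v) y := by
    rw [segment_eq_image']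
    refine ⟨(-a)/(1-a), ⟨div_nonneg (by linarith) (by linarith), by rw [div_le_one (by linarith)]; linarith⟩, ?_⟩
    have h1 : y - (x + a • v) = (1 - a) • v := by rw [hyx]; module
    show x + a • v + ((-a)/(1-a)) • (y - (x + a • v)) = x
    rw [h1, smul_smul, div_mul_cancel₀ _ (by linarith : (1:ℝ) - a ≠ 0)]
    module
  have hsegy : y ∈ segment ℝ x (x + b • v) := by
    rw [segment_eq_image']
    refine ⟨1/b, ⟨by positivity, by rw [div_le_one (by linarith)]; linarith⟩, ?_⟩
    have h1 : (x + b • v) - x = b • v := by module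
    show x + (1/b) • ((x + b • v) - x) = y
    rw [h1, smul_smul, one_div_mul_cancel (by linarith : b ≠ 0), one_smul, hyx]
  -- distances
  have hdist : ∀ s t : ℝ, dist (x + s • v) (x + t • v) = |s - t| * ‖v‖ := by
    intro s t
    rw [dist_eq_norm, show (x + s • v) - (x + t • v) = (s - t) • v by module, norm_smul,
      Real.norm_eq_abs]
  have e0 : x = x + (0:ℝ) • v := by simp
  have d1 : dist x (x + b • v) = b * ‖v‖ := by
    rw [show dist x (x + b • v) = dist (x + (0:ℝ) • v) (x + b • v) from by rw [← e0], hdist]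
    rw [show |0 - b| = b from by rw [abs_of_neg (by linarith)]; ring]
  have d2 : dist y (x + a • v) = (1 - a) * ‖v‖ := by
    rw [show dist y (x + a • v) = dist (x + (1:ℝ) • v) (x + a • v) from by rw [one_smul, ← hyx], hdist]
    rw [abs_of_pos (by linarith)]
  have d3 : dist x (x + a • v) = (-a) * ‖v‖ := by
    rw [show dist x (x + a • v) = dist (x + (0:ℝ) • v) (x + a • v) from by rw [← e0], hdist]
    rw [show |0 - a| = -a from by rw [abs_of_pos (by linarith)]; ring]
  have d4 : dist y (x + b • v) = (b - 1) * ‖v‖ := by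
    rw [show dist y (x + b • v) = dist (x + (1:ℝ) • v) (x + b • v) from by rw [one_smul, ← hyx], hdist]
    rw [show |1 - b| = b - 1 from by rw [abs_of_neg (by linarith)]; ring]
  exact ⟨a, b, ha, hb, hiff, hfrA, hfrB, hsegx, hsegy, d1, d2, d3, d4⟩

end Aux


/-- `d` is the Hilbert metric of the bounded convex domain `X ⊆ ℝⁿ`:
`d x x = 0` on `X`, and for distinct `x, y ∈ X`, whenever `x', y'` are the
boundary points of the chord through `x` and `y` with `x', x, y, y'` in this
order, `d x y` is the logarithm of the cross ratio. -/
def IsHilbertMetric {n : ℕ} (X : Set (EuclideanSpace ℝ (Fin n)))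
    (d : EuclideanSpace ℝ (Fin n) → EuclideanSpace ℝ (Fin n) → ℝ) : Prop :=
  (∀ x ∈ X, d x x = 0) ∧
  ∀ x ∈ X, ∀ y ∈ X, x ≠ y → ∀ x' ∈ frontier X, ∀ y' ∈ frontier X,
    x ∈ segment ℝ x' y → y ∈ segment ℝ x y' →
    d x y = Real.log ((dist x y' * dist y x') / (dist x x' * dist y y'))


section Aux2


variable {n : ℕ} {X : Set (EuclideanSpace ℝ (Fin n))}

lemma crossR_pos {a b : ℝ} (ha : a < 0) (hb : 1 < b) :
    0 < (b * (1 - a)) / ((-a) * (b - 1)) :=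
  div_pos (by nlinarith) (by nlinarith)

lemma crossR_gt_one {a b : ℝ} (ha : a < 0) (hb : 1 < b) :
    1 < (b * (1 - a)) / ((-a) * (b - 1)) := by
  rw [lt_div_iff₀ (by nlinarith)]
  nlinarith

lemma hd_spec (hconv : Convex ℝ X) (hopen : IsOpen X) (hbdd : Bornology.IsBounded X)
    {d : EuclideanSpace ℝ (Fin n) → EuclideanSpace ℝ (Fin n) → ℝ}
    (hd : IsHilbertMetric X d)
    {x y : EuclideanSpace ℝ (Fin n)} (hx : x ∈ X) (hy : y ∈ X) (hxy : x ≠ y) :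
    ∃ a b : ℝ, a < 0 ∧ 1 < b ∧
      (∀ t : ℝ, x + t • (y - x) ∈ X ↔ a < t ∧ t < b) ∧
      x + a • (y - x) ∈ frontier X ∧ x + b • (y - x) ∈ frontier X ∧
      d x y = Real.log ((b * (1 - a)) / ((-a) * (b - 1))) := by
  obtain ⟨a, b, ha, hb, hiff, frA, frB, segx, segy, d1, d2, d3, d4⟩ :=
    chord_full' hconv hopen hbdd hx hy hxy
  refine ⟨a, b, ha, hb, hiff, frA, frB, ?_⟩
  rw [hd.2 x hx y hy hxy _ frA _ frB segx segy, d1, d2, d3, d4]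
  congr 1
  have hv : (0:ℝ) < ‖y - x‖ := norm_pos_iff.2 (sub_ne_zero.2 hxy.symm)
  rw [div_eq_div_iff
    (ne_of_gt (mul_pos (mul_pos (by linarith : (0:ℝ) < -a) hv)
      (mul_pos (by linarith : (0:ℝ) < b - 1) hv)))
    (ne_of_gt (mul_pos (by linarith : (0:ℝ) < -a) (by linarith : (0:ℝ) < b - 1)))]
  ring

lemma funk_bound (hconv : Convex ℝ X) (hopen : IsOpen X) (hbdd : Bornology.IsBounded X)
    {d : EuclideanSpace ℝ (Fin n) → EuclideanSpace ℝ (Fin n) → ℝ}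
    (hd : IsHilbertMetric X d)
    {x y : EuclideanSpace ℝ (Fin n)} (hx : x ∈ X) (hy : y ∈ X) (hxy : x ≠ y)
    (φ ψ : EuclideanSpace ℝ (Fin n) →L[ℝ] ℝ) (cφ cψ : ℝ)
    (hφ : ∀ p ∈ X, φ p < cφ) (hψ : ∀ p ∈ X, ψ p < cψ) :
    (cφ - φ x) * (cψ - ψ y) ≤ Real.exp (d x y) * ((cφ - φ y) * (cψ - ψ x)) := by
  obtain ⟨a, b, ha, hb, hiff, frA, frB, hdxy⟩ := hd_spec hconv hopen hbdd hd hx hy hxy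
  have hφc : ∀ p ∈ closure X, φ p ≤ cφ :=
    fun p hp => closure_minimal (fun q hq => (hφ q hq).le)
      (isClosed_le φ.continuous continuous_const) hp
  have hψc : ∀ p ∈ closure X, ψ p ≤ cψ :=
    fun p hp => closure_minimal (fun q hq => (hψ q hq).le)
      (isClosed_le ψ.continuous continuous_const) hp
  have hA := hφc _ (frontier_subset_closure frB)
  have hB := hψc _ (frontier_subset_closure frA)
  have hwφ : φ (x + b • (y - x)) = φ x + b * (φ y - φ x) := by
    simp [map_add, map_smul, map_sub, smul_eq_mul]
  have huψ : ψ (x + a • (y - x)) = ψ x + a * (ψ y - ψ x) := by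
    simp [map_add, map_smul, map_sub, smul_eq_mul]
  rw [hwφ] at hA
  rw [huψ] at hB
  have fxpos : 0 < cφ - φ x := sub_pos.2 (hφ x hx)
  have fypos : 0 < cφ - φ y := sub_pos.2 (hφ y hy)
  have gxpos : 0 < cψ - ψ x := sub_pos.2 (hψ x hx)
  have gypos : 0 < cψ - ψ y := sub_pos.2 (hψ y hy)
  have A' : (b - 1) * (cφ - φ x) ≤ b * (cφ - φ y) := by nlinarith
  have B' : (-a) * (cψ - ψ y) ≤ (1 - a) * (cψ - ψ x) := by nlinarith
  rw [hdxy, Real.exp_log (crossR_pos ha hb)]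
  have key : ((b - 1) * (cφ - φ x)) * ((-a) * (cψ - ψ y)) ≤
      (b * (cφ - φ y)) * ((1 - a) * (cψ - ψ x)) :=
    mul_le_mul A' B' (by nlinarith) (by nlinarith)
  rw [div_mul_eq_mul_div, le_div_iff₀ (by nlinarith : (0:ℝ) < (-a) * (b - 1))]
  nlinarith [key]

end Aux2

theorem hilbert_metric_is_metric
    {n : ℕ} (hn : 2 ≤ n) (X : Set (EuclideanSpace ℝ (Fin n)))
    (hne : X.Nonempty) (hconv : Convex ℝ X) (hopen : IsOpen X)
    (hbdd : Bornology.IsBounded X)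
    (d : EuclideanSpace ℝ (Fin n) → EuclideanSpace ℝ (Fin n) → ℝ)
    (hd : IsHilbertMetric X d) :
    (∀ x ∈ X, ∀ y ∈ X, 0 ≤ d x y) ∧
    (∀ x ∈ X, ∀ y ∈ X, d x y = d y x) ∧
    (∀ x ∈ X, ∀ y ∈ X, (d x y = 0 ↔ x = y)) ∧
    (∀ x ∈ X, ∀ y ∈ X, ∀ z ∈ X, d x z ≤ d x y + d y z) := by
  have hpos : ∀ x ∈ X, ∀ y ∈ X, x ≠ y → 0 < d x y := by
    intro x hx y hy hxy
    obtain ⟨a, b, ha, hb, _, _, _, hdxy⟩ := hd_spec hconv hopen hbdd hd hx hy hxy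
    rw [hdxy]
    exact Real.log_pos (crossR_gt_one ha hb)
  have hnn : ∀ x ∈ X, ∀ y ∈ X, 0 ≤ d x y := by
    intro x hx y hy
    by_cases hxy : x = y
    · subst hxy; rw [hd.1 x hx]
    · exact (hpos x hx y hy hxy).le
  refine ⟨hnn, ?_, ?_, ?_⟩
  · -- symmetry
    intro x hx y hy
    by_cases hxy : x = y
    · subst hxy; rfl
    obtain ⟨a, b, ha, hb, hiff, frA, frB, segx, segy, d1, d2, d3, d4⟩ :=
      chord_full' hconv hopen hbdd hx hy hxy
    rw [hd.2 x hx y hy hxy _ frA _ frB segx segy,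
      hd.2 y hy x hx (Ne.symm hxy) _ frB _ frA
        (by rw [segment_symm]; exact segy) (by rw [segment_symm]; exact segx)]
    congr 1
    ring
  · -- d x y = 0 ↔ x = y
    intro x hx y hy
    constructor
    · intro h0
      by_contra hxy
      exact absurd h0 (ne_of_gt (hpos x hx y hy hxy))
    · intro h; subst h; exact hd.1 x hx
  · -- triangle inequality
    intro x hx y hy z hz
    by_cases hxz : x = z
    · subst hxz
      rw [hd.1 x hx]
      exact add_nonneg (hnn x hx y hy) (hnn y hy x hx)
    by_cases hxy : x = y
    · subst hxy; rw [hd.1 x hx]; simp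
    by_cases hyz : y = z
    · subst hyz; rw [hd.1 y hy]; simp
    obtain ⟨a, b, ha, hb, hiff, frU, frW, hdxz⟩ := hd_spec hconv hopen hbdd hd hx hz hxz
    set u := x + a • (z - x) with hu
    set w := x + b • (z - x) with hw
    have huX : u ∉ X := by
      rw [hopen.frontier_eq] at frU; exact frU.2
    have hwX : w ∉ X := by
      rw [hopen.frontier_eq] at frW; exact frW.2
    obtain ⟨φ, hφ⟩ := geometric_hahn_banach_open_point hconv hopen hwX
    obtain ⟨ψ, hψ⟩ := geometric_hahn_banach_open_point hconv hopen huX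
    have fxpos : 0 < φ w - φ x := sub_pos.2 (hφ x hx)
    have fypos : 0 < φ w - φ y := sub_pos.2 (hφ y hy)
    have fzpos : 0 < φ w - φ z := sub_pos.2 (hφ z hz)
    have gxpos : 0 < ψ u - ψ x := sub_pos.2 (hψ x hx)
    have gypos : 0 < ψ u - ψ y := sub_pos.2 (hψ y hy)
    have gzpos : 0 < ψ u - ψ z := sub_pos.2 (hψ z hz)
    have hwφ : φ w = φ x + b * (φ z - φ x) := by
      rw [hw]; simp [map_add, map_smul, map_sub, smul_eq_mul]
    have huψ : ψ u = ψ x + a * (ψ z - ψ x) := by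
      rw [hu]; simp [map_add, map_smul, map_sub, smul_eq_mul]
    have E1 : (b - 1) * (φ w - φ x) = b * (φ w - φ z) := by linear_combination -hwφ
    have E2 : (1 - a) * (ψ u - ψ x) = (-a) * (ψ u - ψ z) := by linear_combination huψ
    have F1 := funk_bound hconv hopen hbdd hd hx hy hxy φ ψ (φ w) (ψ u) hφ hψ
    have F2 := funk_bound hconv hopen hbdd hd hy hz hyz φ ψ (φ w) (ψ u) hφ hψ
    have hfygy : 0 < (φ w - φ y) * (ψ u - ψ y) := mul_pos fypos gypos
    have G : (φ w - φ x) * (ψ u - ψ z) ≤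
        Real.exp (d x y) * Real.exp (d y z) * ((φ w - φ z) * (ψ u - ψ x)) := by
      have H := mul_le_mul F1 F2 (by positivity)
        (by positivity)
      refine le_of_mul_le_mul_right ?_ hfygy
      nlinarith [H]
    have hR : (b * (1 - a)) / ((-a) * (b - 1)) =
        ((φ w - φ x) * (ψ u - ψ z)) / ((φ w - φ z) * (ψ u - ψ x)) := by
      rw [div_eq_div_iff (by nlinarith) (by positivity)]
      linear_combination (-(1 - a) * (ψ u - ψ x)) * E1 + ((b - 1) * (φ w - φ x)) * E2
    rw [hdxz, hR, Real.log_le_iff_le_exp (by positivity), Real.exp_add,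
      div_le_iff₀ (by positivity)]
    exact G
end

section
/- Let (X,d) be a Hilbert geometry. For any o, x, y ∈ X and any point z on the Euclidean segment [x,y], we have d(o,z) ≤ max{d(o,x), d(o,y)}. In particular, every open ball of (X,d) is convex with respect to the Euclidean structure. -/
set_option maxHeartbeats 1000000

open Real

section HilbertAux

variable {n : ℕ}

private lemma hilbert_exit_ray {X : Set (EuclideanSpace ℝ (Fin n))} (hconv : Convex ℝ X) (hopen : IsOpen X)
    (hbdd : Bornology.IsBounded X) {p u : EuclideanSpace ℝ (Fin n)} (hp : p ∈ X) (hu : u ≠ 0) :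
    ∃ T : ℝ, 0 < T ∧ p + T • u ∈ frontier X ∧
      ∀ t : ℝ, 0 ≤ t → (p + t • u ∈ closure X ↔ t ≤ T) := by
  have hu0 : 0 < ‖u‖ := norm_pos_iff.mpr hu
  set A : Set ℝ := {t | 0 ≤ t ∧ p + t • u ∈ closure X} with hA
  have hclosed : IsClosed A := by
    have : A = Set.Ici 0 ∩ ((fun t : ℝ => p + t • u) ⁻¹' closure X) := by
      ext t
      simp [hA, Set.mem_Ici]
    rw [this]
    exact isClosed_Ici.inter (IsClosed.preimage (by fun_prop) isClosed_closure)
  have h0A : (0 : ℝ) ∈ A := ⟨le_refl 0, by simpa using subset_closure hp⟩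
  obtain ⟨C, hC⟩ := hbdd.closure.exists_norm_le
  have hbdda : BddAbove A := by
    refine ⟨(C + ‖p‖) / ‖u‖, fun t ht => ?_⟩
    have h1 : ‖p + t • u‖ ≤ C := hC _ ht.2
    have h2 : ‖t • u‖ ≤ ‖p + t • u‖ + ‖p‖ := by
      calc ‖t • u‖ = ‖(p + t • u) - p‖ := by rw [add_sub_cancel_left]
        _ ≤ ‖p + t • u‖ + ‖p‖ := norm_sub_le _ _
    rw [norm_smul, Real.norm_eq_abs, abs_of_nonneg ht.1] at h2
    rw [le_div_iff₀ hu0]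
    linarith
  set T := sSup A with hT
  have hTA : T ∈ A := hclosed.csSup_mem ⟨0, h0A⟩ hbdda
  obtain ⟨ε, hε, hball⟩ := Metric.isOpen_iff.mp hopen p hp
  have hTpos : 0 < T := by
    have hmem : ε / (2 * ‖u‖) ∈ A := by
      constructor
      · positivity
      · refine subset_closure (hball ?_)
        rw [Metric.mem_ball, dist_eq_norm, add_sub_cancel_left, norm_smul, Real.norm_eq_abs,
          abs_of_nonneg (by positivity)]
        have he : ‖u‖ * (ε / (2 * ‖u‖)) = ε / 2 := by field_simp
        rw [mul_comm, he]
        linarith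
    have := le_csSup hbdda hmem
    have : 0 < ε / (2 * ‖u‖) := by positivity
    linarith [le_csSup hbdda hmem]
  have hfr : p + T • u ∈ frontier X := by
    rw [hopen.frontier_eq]
    refine ⟨hTA.2, fun hmem => ?_⟩
    obtain ⟨δ, hδ, hball2⟩ := Metric.isOpen_iff.mp hopen _ hmem
    have hmem2 : T + δ / (2 * ‖u‖) ∈ A := by
      constructor
      · positivity
      · refine subset_closure (hball2 ?_)
        rw [Metric.mem_ball, dist_eq_norm]
        have : p + (T + δ / (2 * ‖u‖)) • u - (p + T • u) = (δ / (2 * ‖u‖)) • u := by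
          rw [add_smul]; abel
        rw [this, norm_smul, Real.norm_eq_abs, abs_of_nonneg (by positivity)]
        have he : ‖u‖ * (δ / (2 * ‖u‖)) = δ / 2 := by field_simp
        rw [mul_comm, he]
        linarith
    have h3 := le_csSup hbdda hmem2
    have h4 : 0 < δ / (2 * ‖u‖) := by positivity
    linarith
  refine ⟨T, hTpos, hfr, fun t ht => ⟨fun hmem => le_csSup hbdda ⟨ht, hmem⟩, fun hle => ?_⟩⟩
  have hcc : Convex ℝ (closure X) := hconv.closure
  have heq : p + t • u = (1 - t / T) • p + (t / T) • (p + T • u) := by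
    have hT0 : T ≠ 0 := hTpos.ne'
    rw [smul_add, smul_smul, div_mul_cancel₀ _ hT0]
    module
  rw [heq]
  exact hcc (subset_closure hp) hTA.2 (by
    rw [sub_nonneg, div_le_one hTpos]; exact hle) (by positivity) (by ring)

private lemma hilbert_gauge_repr {X : Set (EuclideanSpace ℝ (Fin n))} (hconv : Convex ℝ X) (hopen : IsOpen X)
    (hbdd : Bornology.IsBounded X)
    {d : EuclideanSpace ℝ (Fin n) → EuclideanSpace ℝ (Fin n) → ℝ}
    (hd : IsHilbertMetric X d) {o z : EuclideanSpace ℝ (Fin n)} (ho : o ∈ X) (hz : z ∈ X) :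
    ∃ lam mu : ℝ, 1 ≤ lam ∧ 0 < mu ∧ mu ≤ 1 ∧
      Real.exp (d o z) = lam / mu ∧
      (∃ w ∈ closure X, lam • o - z = (lam - 1) • w) ∧
      (∃ w ∈ closure X, z - mu • o = (1 - mu) • w) ∧
      (∀ l : ℝ, 1 ≤ l → (∃ w ∈ closure X, l • o - z = (l - 1) • w) → lam ≤ l) ∧
      (∀ m : ℝ, 0 ≤ m → m ≤ 1 → (∃ w ∈ closure X, z - m • o = (1 - m) • w) → m ≤ mu) := by
  by_cases hzo : z = o
  · subst hzo
    refine ⟨1, 1, le_refl 1, one_pos, le_refl 1, ?_, ⟨z, subset_closure hz, by module⟩,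
      ⟨z, subset_closure hz, by module⟩, fun l hl _ => hl, fun m _ hm _ => hm⟩
    rw [hd.1 z hz, Real.exp_zero]
    norm_num
  · have huz : z - o ≠ 0 := sub_ne_zero.mpr hzo
    have huo : o - z ≠ 0 := sub_ne_zero.mpr (Ne.symm hzo)
    obtain ⟨S, hS0, hSfr, hSiff⟩ := hilbert_exit_ray hconv hopen hbdd ho huo
    obtain ⟨R, hR0, hRfr, hRiff⟩ := hilbert_exit_ray hconv hopen hbdd hz huz
    set o' := o + S • (o - z) with ho'
    set z' := z + R • (z - o) with hz'
    have hc0 : 0 < ‖z - o‖ := norm_pos_iff.mpr huz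
    set c := ‖z - o‖ with hcdef
    -- segment memberships
    have hseg1 : o ∈ segment ℝ o' z := by
      refine ⟨1 / (1 + S), S / (1 + S), by positivity, by positivity, by field_simp, ?_⟩
      rw [ho']
      have h1 : (1 + S) ≠ 0 := by positivity
      rw [smul_add, smul_smul]
      have h2 : 1 / (1 + S) * S = S / (1 + S) := by ring
      rw [h2]
      have h3 : 1 / (1 + S) + S / (1 + S) = 1 := by field_simp
      match_scalars <;> field_simp <;> ring
    have hseg2 : z ∈ segment ℝ o z' := by
      refine ⟨R / (1 + R), 1 / (1 + R), by positivity, by positivity, by field_simp; ring, ?_⟩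
      rw [hz']
      match_scalars <;> field_simp <;> ring
    -- distances
    have hd1 : dist o z' = (1 + R) * c := by
      rw [dist_eq_norm]
      have : o - z' = (-(1 + R)) • (z - o) := by rw [hz']; module
      rw [this, norm_smul, Real.norm_eq_abs]
      rw [abs_of_nonpos (by linarith)]
      ring_nf
      rw [hcdef]
    have hd2 : dist z o' = (1 + S) * c := by
      rw [dist_eq_norm]
      have : z - o' = (1 + S) • (z - o) := by rw [ho']; module
      rw [this, norm_smul, Real.norm_eq_abs, abs_of_nonneg (by linarith)]
    have hd3 : dist o o' = S * c := by
      rw [dist_eq_norm]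
      have : o - o' = S • (z - o) := by rw [ho']; module
      rw [this, norm_smul, Real.norm_eq_abs, abs_of_nonneg hS0.le]
    have hd4 : dist z z' = R * c := by
      rw [dist_eq_norm]
      have : z - z' = (-R) • (z - o) := by rw [hz']; module
      rw [this, norm_smul, Real.norm_eq_abs, abs_of_nonpos (by linarith)]
      ring_nf
      rw [hcdef]
    have hdval : d o z = Real.log ((1 + R) * (1 + S) / (S * R)) := by
      rw [hd.2 o ho z hz (Ne.symm hzo) o' hSfr z' hRfr hseg1 hseg2, hd1, hd2, hd3, hd4]
      congr 1
      field_simp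
    refine ⟨(S + 1) / S, R / (R + 1), ?_, by positivity, ?_, ?_, ?_, ?_, ?_, ?_⟩
    · rw [le_div_iff₀ hS0]; linarith
    · rw [div_le_one (by positivity)]; linarith
    · rw [hdval, Real.exp_log (by positivity)]
      field_simp
      ring
    · refine ⟨o', hSfr.1, ?_⟩  -- frontier ⊆ closure?
      have he : (S + 1) / S - 1 = 1 / S := by field_simp; ring
      rw [he, ho']
      match_scalars <;> field_simp <;> ring
    · refine ⟨z', hRfr.1, ?_⟩
      have he : 1 - R / (R + 1) = 1 / (R + 1) := by field_simp; ring
      rw [he, hz']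
      match_scalars <;> field_simp <;> ring
    · -- minimality
      rintro l hl ⟨w, hw, hwe⟩
      rcases eq_or_lt_of_le hl with h1 | h1
      · exfalso
        rw [← h1] at hwe
        simp only [one_smul, sub_self, zero_smul] at hwe
        exact huo hwe
      · have hl1 : (0:ℝ) < l - 1 := by linarith
        set t := (l - 1)⁻¹ with htdef
        have htpos : 0 < t := by positivity
        have hkey : (l - 1) • (o + t • (o - z)) = (l - 1) • w := by
          rw [← hwe, smul_add, smul_smul, mul_inv_cancel₀ hl1.ne', one_smul]
          module
        have hwq : o + t • (o - z) = w :=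
          smul_right_injective _ hl1.ne' hkey
        have hmem : o + t • (o - z) ∈ closure X := hwq ▸ hw
        have htS : t ≤ S := (hSiff t htpos.le).mp hmem
        rw [div_le_iff₀ hS0]
        have h2 : t * (l - 1) = 1 := inv_mul_cancel₀ hl1.ne'
        nlinarith
    · -- maximality
      rintro m hm0 hm1 ⟨w, hw, hwe⟩
      rcases eq_or_lt_of_le hm1 with h1 | h1
      · exfalso
        rw [h1] at hwe
        simp only [one_smul, sub_self, zero_smul] at hwe
        exact huz hwe
      · have hm1' : (0:ℝ) < 1 - m := by linarith
        set t := m * (1 - m)⁻¹ with htdef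
        have htpos : 0 ≤ t := by positivity
        have hkey : (1 - m) • (z + t • (z - o)) = (1 - m) • w := by
          rw [← hwe, smul_add, smul_smul]
          have : (1 - m) * (m * (1 - m)⁻¹) = m := by field_simp
          rw [this]
          module
        have hwq : z + t • (z - o) = w := smul_right_injective _ hm1'.ne' hkey
        have hmem : z + t • (z - o) ∈ closure X := hwq ▸ hw
        have htR : t ≤ R := (hRiff t htpos).mp hmem
        rw [le_div_iff₀ (by positivity)]
        have h2 : t * (1 - m) = m := by rw [htdef]; field_simp
        nlinarith

private lemma hilbert_part1 {X : Set (EuclideanSpace ℝ (Fin n))} (hconv : Convex ℝ X) (hopen : IsOpen X)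
    (hbdd : Bornology.IsBounded X)
    {d : EuclideanSpace ℝ (Fin n) → EuclideanSpace ℝ (Fin n) → ℝ}
    (hd : IsHilbertMetric X d) :
    ∀ o ∈ X, ∀ x ∈ X, ∀ y ∈ X, ∀ z ∈ segment ℝ x y, d o z ≤ max (d o x) (d o y) := by
  intro o ho x hx y hy z hzseg
  obtain ⟨a, b, ha, hb, hab, hzeq⟩ := hzseg
  rcases eq_or_lt_of_le ha with ha0 | ha0
  · have hb1 : b = 1 := by linarith
    have : z = y := by rw [← hzeq, ← ha0, hb1]; module
    rw [this]
    exact le_max_right _ _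
  rcases eq_or_lt_of_le hb with hb0 | hb0
  · have ha1 : a = 1 := by linarith
    have : z = x := by rw [← hzeq, ← hb0, ha1]; module
    rw [this]
    exact le_max_left _ _
  have hzX : z ∈ X := hzeq ▸ hconv hx hy ha hb hab
  obtain ⟨lx, mx, hlx1, hmx0, hmx1, hex, ⟨wx, hwx, hwxe⟩, ⟨vx, hvx, hvxe⟩, -, -⟩ :=
    hilbert_gauge_repr hconv hopen hbdd hd ho hx
  obtain ⟨ly, my, hly1, hmy0, hmy1, hey, ⟨wy, hwy, hwye⟩, ⟨vy, hvy, hvye⟩, -, -⟩ :=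
    hilbert_gauge_repr hconv hopen hbdd hd ho hy
  obtain ⟨lz, mz, hlz1, hmz0, hmz1, hez, -, -, hmin, hmax⟩ :=
    hilbert_gauge_repr hconv hopen hbdd hd ho hzX
  set L := a * lx + b * ly with hL
  set M := a * mx + b * my with hM
  have ha1x : a * 1 ≤ a * lx := mul_le_mul_of_nonneg_left hlx1 ha
  have hb1y : b * 1 ≤ b * ly := mul_le_mul_of_nonneg_left hly1 hb
  have hL1 : 1 ≤ L := by rw [hL]; linarith
  have hM0 : 0 < M := by rw [hM]; exact add_pos (mul_pos ha0 hmx0) (mul_pos hb0 hmy0)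
  have hax1 : a * mx ≤ a * 1 := mul_le_mul_of_nonneg_left hmx1 ha
  have hby1 : b * my ≤ b * 1 := mul_le_mul_of_nonneg_left hmy1 hb
  have hM1 : M ≤ 1 := by rw [hM]; linarith
  -- claim 1 : lz ≤ L
  have hclaim1 : lz ≤ L := by
    refine hmin L hL1 ?_
    set α := a * (lx - 1) with hα
    set β := b * (ly - 1) with hβ
    have hα0 : 0 ≤ α := mul_nonneg ha (by linarith)
    have hβ0 : 0 ≤ β := mul_nonneg hb (by linarith)
    have hLsub : L - 1 = α + β := by rw [hL, hα, hβ]; linear_combination hab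
    by_cases hαβ : α + β = 0
    · have hαz : α = 0 := by linarith
      have hβz : β = 0 := by linarith
      have hlx : lx = 1 := by
        rcases mul_eq_zero.mp hαz with h | h
        · exact absurd h ha0.ne'
        · linarith
      have hly : ly = 1 := by
        rcases mul_eq_zero.mp hβz with h | h
        · exact absurd h hb0.ne'
        · linarith
      have hxo : x = o := by
        rw [hlx] at hwxe
        simp only [one_smul, sub_self, zero_smul] at hwxe
        exact (sub_eq_zero.mp hwxe).symm
      have hyo : y = o := by
        rw [hly] at hwye
        simp only [one_smul, sub_self, zero_smul] at hwye
        exact (sub_eq_zero.mp hwye).symm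
      refine ⟨o, subset_closure ho, ?_⟩
      have hL' : L = 1 := by linarith
      rw [hL', ← hzeq, hxo, hyo, ← add_smul, hab]
      module
    · have hαβpos : 0 < α + β := lt_of_le_of_ne (by linarith) (Ne.symm hαβ)
      refine ⟨(α / (α + β)) • wx + (β / (α + β)) • wy,
        hconv.closure hwx hwy (by positivity) (by positivity) (by field_simp), ?_⟩
      have e1 : (α + β) * (α / (α + β)) = α := by field_simp
      have e2 : (α + β) * (β / (α + β)) = β := by field_simp
      rw [hLsub, smul_add, smul_smul, smul_smul, e1, e2, ← hzeq]
      linear_combination (norm := module) a • hwxe + b • hwye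
  -- claim 2 : M ≤ mz
  have hclaim2 : M ≤ mz := by
    refine hmax M (by positivity) hM1 ?_
    set γ := a * (1 - mx) with hγ
    set δ := b * (1 - my) with hδ
    have hγ0 : 0 ≤ γ := mul_nonneg ha (by linarith)
    have hδ0 : 0 ≤ δ := mul_nonneg hb (by linarith)
    have hMsub : 1 - M = γ + δ := by rw [hM, hγ, hδ]; linear_combination -hab
    by_cases hγδ : γ + δ = 0
    · have hγz : γ = 0 := by linarith
      have hδz : δ = 0 := by linarith
      have hmx : mx = 1 := by
        rcases mul_eq_zero.mp hγz with h | h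
        · exact absurd h ha0.ne'
        · linarith
      have hmy : my = 1 := by
        rcases mul_eq_zero.mp hδz with h | h
        · exact absurd h hb0.ne'
        · linarith
      have hxo : x = o := by
        rw [hmx] at hvxe
        simp only [one_smul, sub_self, zero_smul] at hvxe
        exact sub_eq_zero.mp hvxe
      have hyo : y = o := by
        rw [hmy] at hvye
        simp only [one_smul, sub_self, zero_smul] at hvye
        exact sub_eq_zero.mp hvye
      refine ⟨o, subset_closure ho, ?_⟩
      have hM' : M = 1 := by linarith
      rw [hM', ← hzeq, hxo, hyo, ← add_smul, hab]
      module
    · have hγδpos : 0 < γ + δ := lt_of_le_of_ne (by linarith) (Ne.symm hγδ)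
      refine ⟨(γ / (γ + δ)) • vx + (δ / (γ + δ)) • vy,
        hconv.closure hvx hvy (by positivity) (by positivity) (by field_simp), ?_⟩
      have e1 : (γ + δ) * (γ / (γ + δ)) = γ := by field_simp
      have e2 : (γ + δ) * (δ / (γ + δ)) = δ := by field_simp
      rw [hMsub, smul_add, smul_smul, smul_smul, e1, e2, ← hzeq]
      linear_combination (norm := module) a • hvxe + b • hvye
  -- final chain
  have hKx : Real.exp (d o x) = lx / mx := hex
  have hstep1 : Real.exp (d o z) ≤ L / M := by
    rw [hez]
    exact div_le_div₀ (by linarith) hclaim1 hM0 hclaim2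
  have hK := le_max_left (lx / mx) (ly / my)
  set K := max (lx / mx) (ly / my) with hKdef
  have hstep2 : L / M ≤ K := by
    rw [div_le_iff₀ hM0]
    have h1 : lx ≤ K * mx := by
      rw [← div_le_iff₀ hmx0]
      exact le_max_left _ _
    have h2 : ly ≤ K * my := by
      rw [← div_le_iff₀ hmy0]
      exact le_max_right _ _
    have h3 : a * lx ≤ a * (K * mx) := mul_le_mul_of_nonneg_left h1 ha
    have h4 : b * ly ≤ b * (K * my) := mul_le_mul_of_nonneg_left h2 hb
    rw [hL, hM]
    nlinarith
  have hstep3 : K = Real.exp (max (d o x) (d o y)) := by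
    rw [hKdef, ← hex, ← hey]
    exact (Real.exp_monotone.map_max).symm
  have : Real.exp (d o z) ≤ Real.exp (max (d o x) (d o y)) := by
    rw [← hstep3]
    exact le_trans hstep1 hstep2
  exact Real.exp_le_exp.mp this

end HilbertAux

theorem hilbert_dist_le_max_and_balls_convex
    {n : ℕ} (hn : 2 ≤ n) (X : Set (EuclideanSpace ℝ (Fin n)))
    (hne : X.Nonempty) (hconv : Convex ℝ X) (hopen : IsOpen X)
    (hbdd : Bornology.IsBounded X)
    (d : EuclideanSpace ℝ (Fin n) → EuclideanSpace ℝ (Fin n) → ℝ)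
    (hd : IsHilbertMetric X d) :
    (∀ o ∈ X, ∀ x ∈ X, ∀ y ∈ X, ∀ z ∈ segment ℝ x y,
      d o z ≤ max (d o x) (d o y)) ∧
    (∀ c ∈ X, ∀ r : ℝ, Convex ℝ {x | x ∈ X ∧ d c x < r}) := by
  have hp1 := hilbert_part1 hconv hopen hbdd hd
  refine ⟨hp1, fun c hc r => ?_⟩
  rintro x ⟨hxX, hxr⟩ y ⟨hyX, hyr⟩ a b ha hb hab
  refine ⟨hconv hxX hyX ha hb hab, ?_⟩
  have := hp1 c hc x hxX y hyX (a • x + b • y) ⟨a, b, ha, hb, hab, rfl⟩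
  exact lt_of_le_of_lt this (max_lt hxr hyr)
end

section
/- Every Hilbert geometry (X,d) is a proper metric space: every closed bounded subset of (X,d) is compact. -/
open Real

lemma exit_points {n : ℕ} {X : Set (EuclideanSpace ℝ (Fin n))}
    (hconv : Convex ℝ X) (hopen : IsOpen X) (hbdd : Bornology.IsBounded X)
    {x y : EuclideanSpace ℝ (Fin n)} (hx : x ∈ X) (hy : y ∈ X) (hxy : x ≠ y) :
    ∃ a b : ℝ, a < 0 ∧ 1 < b ∧ x + a • (y - x) ∈ frontier X ∧
      x + b • (y - x) ∈ frontier X := by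
  set v := y - x with hv
  have hv0 : v ≠ 0 := sub_ne_zero.mpr (Ne.symm hxy)
  have hvn : (0:ℝ) < ‖v‖ := norm_pos_iff.mpr hv0
  set S : Set ℝ := {t : ℝ | x + t • v ∈ closure X} with hS
  have hScl : IsClosed S := by
    have : Continuous fun t : ℝ => x + t • v := by continuity
    exact IsClosed.preimage this isClosed_closure
  have hSconv : Convex ℝ S := by
    intro s hs t ht c₁ c₂ hc₁ hc₂ hc
    simp only [S, Set.mem_setOf_eq] at hs ht ⊢
    have hc₂' : c₂ = 1 - c₁ := by linarith
    subst hc₂'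
    have heq : x + (c₁ • s + (1 - c₁) • t) • v
        = c₁ • (x + s • v) + (1 - c₁) • (x + t • v) := by
      simp only [smul_eq_mul]; module
    rw [heq]
    exact hconv.closure hs ht hc₁ (by linarith) (by ring)
  obtain ⟨R, hR⟩ := (hbdd.closure).subset_closedBall x
  have hSsub : S ⊆ Set.Icc (-(R / ‖v‖)) (R / ‖v‖) := by
    intro t ht
    have h1 : dist (x + t • v) x ≤ R := hR ht
    have h2 : dist (x + t • v) x = |t| * ‖v‖ := by
      rw [dist_eq_norm]
      simp [norm_smul]
    rw [h2] at h1
    have : |t| ≤ R / ‖v‖ := (le_div_iff₀ hvn).mpr h1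
    exact abs_le.mp this
  have hBddA : BddAbove S := BddAbove.mono hSsub (bddAbove_Icc)
  have hBddB : BddBelow S := BddBelow.mono hSsub (bddBelow_Icc)
  have h0S : (0:ℝ) ∈ S := by
    simp only [S, Set.mem_setOf_eq, zero_smul, add_zero]
    exact subset_closure hx
  have h1S : (1:ℝ) ∈ S := by
    simp only [S, Set.mem_setOf_eq, one_smul]
    have : x + v = y := by rw [hv]; abel
    rw [this]; exact subset_closure hy
  have hSne : S.Nonempty := ⟨0, h0S⟩
  set b := sSup S with hb
  set a := sInf S with ha
  have hbS : b ∈ S := hScl.csSup_mem hSne hBddA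
  have haS : a ∈ S := hScl.csInf_mem hSne hBddB
  have hb1 : 1 ≤ b := le_csSup hBddA h1S
  have ha0 : a ≤ 0 := csInf_le hBddB h0S
  -- b is on the frontier
  have hnotX : ∀ t : ℝ, t ∈ S → (∀ ε > (0:ℝ), ∃ t' ∈ S, |t' - t| = ε) → True := fun _ _ _ => trivial
  have hbnot : x + b • v ∉ X := by
    intro hbX
    obtain ⟨ε, hε, hball⟩ := Metric.isOpen_iff.mp hopen _ hbX
    have ht' : b + ε / (2 * ‖v‖) ∈ S := by
      have : x + (b + ε / (2 * ‖v‖)) • v ∈ X := by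
        apply hball
        rw [Metric.mem_ball, dist_eq_norm]
        have : x + (b + ε / (2 * ‖v‖)) • v - (x + b • v) = (ε / (2 * ‖v‖)) • v := by
          module
        rw [this, norm_smul, Real.norm_eq_abs, abs_of_pos (by positivity)]
        rw [div_mul_eq_mul_div, mul_comm]
        rw [div_lt_iff₀ (by positivity)]
        nlinarith
      exact subset_closure this
    have := le_csSup hBddA ht'
    have hpos : (0:ℝ) < ε / (2 * ‖v‖) := by positivity
    linarith
  have hanot : x + a • v ∉ X := by
    intro haX
    obtain ⟨ε, hε, hball⟩ := Metric.isOpen_iff.mp hopen _ haX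
    have ht' : a - ε / (2 * ‖v‖) ∈ S := by
      have : x + (a - ε / (2 * ‖v‖)) • v ∈ X := by
        apply hball
        rw [Metric.mem_ball, dist_eq_norm]
        have : x + (a - ε / (2 * ‖v‖)) • v - (x + a • v) = (-(ε / (2 * ‖v‖))) • v := by
          module
        rw [this, norm_smul, Real.norm_eq_abs, abs_of_neg (neg_lt_zero.mpr (by positivity)), neg_neg]
        rw [div_mul_eq_mul_div, mul_comm]
        rw [div_lt_iff₀ (by positivity)]
        nlinarith
      exact subset_closure this
    have := csInf_le hBddB ht'
    have hpos : (0:ℝ) < ε / (2 * ‖v‖) := by positivity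
    linarith
  have hbf : x + b • v ∈ frontier X := by
    rw [hopen.frontier_eq]
    exact ⟨hbS, hbnot⟩
  have haf : x + a • v ∈ frontier X := by
    rw [hopen.frontier_eq]
    exact ⟨haS, hanot⟩
  refine ⟨a, b, ?_, ?_, haf, hbf⟩
  · rcases lt_or_eq_of_le ha0 with h | h
    · exact h
    · exfalso; apply hanot; rw [h]; simpa using hx
  · rcases lt_or_eq_of_le hb1 with h | h
    · exact h
    · exfalso; apply hbnot; rw [← h]
      have : x + (1:ℝ) • v = y := by rw [hv]; module
      rw [this]; exact hy

lemma near_point {n : ℕ} {X : Set (EuclideanSpace ℝ (Fin n))}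
    (hconv : Convex ℝ X) (hopen : IsOpen X) (hbdd : Bornology.IsBounded X)
    {d : EuclideanSpace ℝ (Fin n) → EuclideanSpace ℝ (Fin n) → ℝ}
    (hd : IsHilbertMetric X d) {M : ℝ}
    {x y : EuclideanSpace ℝ (Fin n)} (hx : x ∈ X) (hy : y ∈ X) (hxy : x ≠ y)
    (hdxy : d x y ≤ M) :
    ∃ s : ℝ, 0 < s ∧ s ≤ 1 - Real.exp (-M) ∧
      ∃ y' ∈ closure X, y = (1 - s) • x + s • y' := by
  obtain ⟨a, b, ha, hb, haf, hbf⟩ := exit_points hconv hopen hbdd hx hy hxy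
  set v := y - x with hv
  have hv0 : v ≠ 0 := sub_ne_zero.mpr (Ne.symm hxy)
  have hvn : (0:ℝ) < ‖v‖ := norm_pos_iff.mpr hv0
  set x' := x + a • v with hx'
  set y' := x + b • v with hy'
  have hyeq : y = x + v := by rw [hv]; abel
  have ha1 : (0:ℝ) < 1 - a := by linarith
  have hseg1 : x ∈ segment ℝ x' y := by
    refine ⟨1 / (1 - a), -a / (1 - a), by positivity,
      div_nonneg (by linarith) (by linarith), ?_, ?_⟩
    · field_simp; ring
    · rw [hx', hyeq]
      match_scalars <;> (field_simp; try ring)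
  have hseg2 : y ∈ segment ℝ x y' := by
    refine ⟨1 - 1 / b, 1 / b, by
        rw [sub_nonneg]
        rw [div_le_one (by linarith)]; linarith, by positivity, by ring, ?_⟩
    rw [hy', hyeq]
    match_scalars <;> (field_simp; try ring)
  have hform := hd.2 x hx y hy hxy x' haf y' hbf hseg1 hseg2
  have hd1 : dist x y' = b * ‖v‖ := by
    rw [hy', dist_eq_norm]
    have : x - (x + b • v) = (-b) • v := by module
    rw [this, norm_smul, Real.norm_eq_abs, abs_of_neg (by linarith), neg_neg]
  have hd2 : dist y x' = (1 - a) * ‖v‖ := by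
    rw [hx', hyeq, dist_eq_norm]
    have : x + v - (x + a • v) = (1 - a) • v := by module
    rw [this, norm_smul, Real.norm_eq_abs, abs_of_pos ha1]
  have hd3 : dist x x' = (-a) * ‖v‖ := by
    rw [hx', dist_eq_norm]
    have : x - (x + a • v) = (-a) • v := by module
    rw [this, norm_smul, Real.norm_eq_abs, abs_of_pos (by linarith)]
  have hd4 : dist y y' = (b - 1) * ‖v‖ := by
    rw [hy', hyeq, dist_eq_norm]
    have : x + v - (x + b • v) = (-(b-1)) • v := by module
    rw [this, norm_smul, Real.norm_eq_abs, abs_of_neg (by linarith), neg_neg]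
  rw [hd1, hd2, hd3, hd4] at hform
  have hane : a ≠ 0 := ne_of_lt ha
  have hb1ne : b - 1 ≠ 0 := ne_of_gt (by linarith)
  have hvne : ‖v‖ ≠ 0 := ne_of_gt hvn
  have hratio : (b * ‖v‖ * ((1 - a) * ‖v‖)) / ((-a) * ‖v‖ * ((b - 1) * ‖v‖))
      = (b * (1 - a)) / ((-a) * (b - 1)) := by
    rw [mul_mul_mul_comm, mul_mul_mul_comm (-a), mul_div_mul_right]
    positivity
  rw [hratio] at hform
  -- the ratio is at least b/(b-1)
  have hb1 : (0:ℝ) < b - 1 := by linarith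
  have hbpos : (0:ℝ) < b := by linarith
  have hna : (0:ℝ) < -a := by linarith
  have hge : b / (b - 1) ≤ (b * (1 - a)) / ((-a) * (b - 1)) := by
    rw [div_le_div_iff₀ hb1 (by positivity)]
    nlinarith
  have hRpos : (0:ℝ) < b / (b - 1) := by positivity
  have hlog : Real.log (b / (b - 1)) ≤ M := by
    calc Real.log (b / (b - 1)) ≤ Real.log ((b * (1 - a)) / ((-a) * (b - 1))) :=
          Real.log_le_log hRpos hge
      _ = d x y := hform.symm
      _ ≤ M := hdxy
  have hle : b / (b - 1) ≤ Real.exp M := by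
    rw [← Real.exp_log hRpos]
    exact Real.exp_le_exp.mpr hlog
  have hkey : Real.exp (-M) ≤ (b - 1) / b := by
    rw [Real.exp_neg]
    rw [inv_le_comm₀ (Real.exp_pos M) (by positivity)]
    rwa [inv_div]
  refine ⟨1 / b, by positivity, ?_, y', ?_, ?_⟩
  · have : 1 - 1 / b = (b - 1) / b := by field_simp
    linarith [hkey, this]
  · exact hbf.1
  · rw [hy', hyeq]
    match_scalars <;> (field_simp; try ring)

theorem hilbert_geometry_proper
    {n : ℕ} (hn : 2 ≤ n) (X : Set (EuclideanSpace ℝ (Fin n)))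
    (hne : X.Nonempty) (hconv : Convex ℝ X) (hopen : IsOpen X)
    (hbdd : Bornology.IsBounded X)
    (d : EuclideanSpace ℝ (Fin n) → EuclideanSpace ℝ (Fin n) → ℝ)
    (hd : IsHilbertMetric X d) :
    ∀ A : Set X, IsClosed A →
      (∃ M : ℝ, ∀ a ∈ A, ∀ b ∈ A, d a b ≤ M) → IsCompact A := by
  intro A hA hbound
  obtain ⟨M, hM⟩ := hbound
  rcases A.eq_empty_or_nonempty with rfl | ⟨x₀, hx₀⟩
  · exact isCompact_empty
  set M' := max M 0 with hM'def
  have hM'0 : (0:ℝ) ≤ M' := le_max_right _ _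
  set K : Set (EuclideanSpace ℝ (Fin n)) := Subtype.val '' A with hK
  obtain ⟨ε, hε, hball⟩ := Metric.isOpen_iff.mp hopen _ x₀.2
  set ρ := Real.exp (-M') * (ε / 2) with hρ
  have hexp1 : Real.exp (-M') ≤ 1 := Real.exp_le_one_iff.mpr (by linarith)
  have hρpos : (0:ℝ) < ρ := by positivity
  have hclos : closure K ⊆ X := by
    intro p hp
    obtain ⟨q, hqK, hpq⟩ := Metric.mem_closure_iff.mp hp ρ hρpos
    obtain ⟨⟨qv, hqX⟩, hqA, rfl⟩ := hqK
    by_cases hq : qv = (x₀ : EuclideanSpace ℝ (Fin n))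
    · apply hball
      rw [Metric.mem_ball]
      have hρε : ρ ≤ ε / 2 := by
        rw [hρ]; nlinarith [Real.exp_pos (-M')]
      calc dist p (x₀ : EuclideanSpace ℝ (Fin n)) = dist p qv := by rw [hq]
        _ < ρ := hpq
        _ ≤ ε / 2 := hρε
        _ < ε := by linarith
    · have hd' : d x₀ qv ≤ M' :=
        le_trans (hM x₀ hx₀ ⟨qv, hqX⟩ hqA) (le_max_left _ _)
      have hne' : (x₀ : EuclideanSpace ℝ (Fin n)) ≠ qv := fun h => hq h.symm
      obtain ⟨s, hs0, hsle, y', hy'cl, hyeq⟩ :=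
        near_point hconv hopen hbdd hd x₀.2 hqX hne' hd'
      have h1s : Real.exp (-M') ≤ 1 - s := by linarith
      have h1spos : (0:ℝ) < 1 - s := lt_of_lt_of_le (Real.exp_pos _) h1s
      obtain ⟨w, hw⟩ : ∃ w, w = (1 - s)⁻¹ • (p - qv) := ⟨_, rfl⟩
      have hwnorm : ‖w‖ < ε := by
        rw [hw, norm_smul, Real.norm_eq_abs, abs_of_pos (by positivity)]
        have h1 : ‖p - qv‖ < ρ := by rw [← dist_eq_norm]; exact hpq
        have h2 : (1 - s)⁻¹ ≤ (Real.exp (-M'))⁻¹ := by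
          apply inv_anti₀ (Real.exp_pos _) h1s
        calc (1 - s)⁻¹ * ‖p - qv‖ ≤ (Real.exp (-M'))⁻¹ * ‖p - qv‖ := by
              apply mul_le_mul_of_nonneg_right h2 (norm_nonneg _)
          _ < (Real.exp (-M'))⁻¹ * ρ := by
              apply mul_lt_mul_of_pos_left h1 (by positivity)
          _ = ε / 2 := by
              rw [hρ, ← mul_assoc, inv_mul_cancel₀ (ne_of_gt (Real.exp_pos _)), one_mul]
          _ < ε := by linarith
      have hxw : (x₀ : EuclideanSpace ℝ (Fin n)) + w ∈ X := by
        apply hball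
        rw [Metric.mem_ball, dist_eq_norm]
        simpa using hwnorm
      have hpeq : p = (1 - s) • ((x₀ : EuclideanSpace ℝ (Fin n)) + w) + s • y' := by
        have h1 : (1 - s) • w = p - qv := by
          rw [hw, smul_smul, mul_inv_cancel₀ (ne_of_gt h1spos), one_smul]
        calc p = qv + (1 - s) • w := by rw [h1]; abel
          _ = (1 - s) • ((x₀ : EuclideanSpace ℝ (Fin n)) + w) + s • y' := by
              rw [hyeq]; module
      rw [hpeq]
      have hmem := hconv.combo_interior_closure_mem_interior
        (by rw [hopen.interior_eq]; exact hxw) hy'cl h1spos (le_of_lt hs0) (by ring)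
      rwa [hopen.interior_eq] at hmem
  have hKclosed : IsClosed K := by
    apply isClosed_of_closure_subset
    intro p hp
    have hpX : p ∈ X := hclos hp
    have hmem : (⟨p, hpX⟩ : X) ∈ closure A := closure_subtype.mpr (by simpa using hp)
    exact ⟨⟨p, hpX⟩, hA.closure_subset hmem, rfl⟩
  have hKbdd : Bornology.IsBounded K := hbdd.subset (by
    rintro _ ⟨q, _, rfl⟩; exact q.2)
  have hKcomp : IsCompact K := Metric.isCompact_of_isClosed_isBounded hKclosed hKbdd
  rw [Subtype.isCompact_iff]
  exact hKcomp
end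

section
/- Let (X,d) be a Hilbert geometry, and fix r > 0 and R > 0. Set D = (e^r − 1)/(e^{2R} − 1). Then for any closed d-ball B(x,r) contained in a closed d-ball of radius R, and for any y in that R-ball, the point x + D(y − x) lies in B(x,r). -/
set_option maxHeartbeats 1000000


open Real

section helpers

variable {n : ℕ} {X : Set (EuclideanSpace ℝ (Fin n))}
  {d : EuclideanSpace ℝ (Fin n) → EuclideanSpace ℝ (Fin n) → ℝ}

private lemma combo_line (p u : EuclideanSpace ℝ (Fin n)) {α β : ℝ} (s t : ℝ) (h : α + β = 1) :
    α • (p + s • u) + β • (p + t • u) = p + (α * s + β * t) • u := by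
  match_scalars <;> ring_nf <;> linarith

private lemma mem_segment_line (p u : EuclideanSpace ℝ (Fin n)) {s1 s2 s3 : ℝ}
    (h1 : s1 ≤ s2) (h2 : s2 ≤ s3) :
    p + s2 • u ∈ segment ℝ (p + s1 • u) (p + s3 • u) := by
  by_cases h : s1 = s3
  · have : s2 = s1 := le_antisymm (h ▸ h2) h1
    subst this
    exact left_mem_segment ℝ _ _
  · have h13 : s1 < s3 := lt_of_le_of_ne (h1.trans h2) h
    set θ := (s2 - s1) / (s3 - s1) with hθ
    have hd : (0:ℝ) < s3 - s1 := by linarith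
    have hθ0 : 0 ≤ θ := div_nonneg (by linarith) hd.le
    have hθ1 : θ ≤ 1 := (div_le_one hd).2 (by linarith)
    refine ⟨1 - θ, θ, by linarith, hθ0, by ring, ?_⟩
    rw [combo_line p u s1 s3 (by ring)]
    congr 2
    have : θ * (s3 - s1) = s2 - s1 := div_mul_cancel₀ _ hd.ne'
    linear_combination this

private lemma dist_line {u : EuclideanSpace ℝ (Fin n)} (hu : ‖u‖ = 1)
    (p : EuclideanSpace ℝ (Fin n)) (s t : ℝ) :
    dist (p + s • u) (p + t • u) = |s - t| := by
  rw [dist_eq_norm]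
  have h : p + s • u - (p + t • u) = (s - t) • u := by match_scalars <;> ring
  rw [h, norm_smul, hu, mul_one, Real.norm_eq_abs]

private lemma chord (hconv : Convex ℝ X) (hopen : IsOpen X) (hbdd : Bornology.IsBounded X)
    (hd : IsHilbertMetric X d) {p q : EuclideanSpace ℝ (Fin n)}
    (hp : p ∈ X) (hq : q ∈ X) (hpq : p ≠ q) :
    ∃ (u : EuclideanSpace ℝ (Fin n)) (a b : ℝ), ‖u‖ = 1 ∧ 0 < a ∧ dist p q < b ∧
      q = p + dist p q • u ∧
      p + (-a) • u ∈ frontier X ∧ p + b • u ∈ frontier X ∧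
      ∀ s : ℝ, 0 < s → s < b →
        p + s • u ∈ X ∧ d p (p + s • u) = Real.log (b * (a + s) / (a * (b - s))) := by
  classical
  set t := dist p q with htdef
  have ht : 0 < t := dist_pos.2 hpq
  set u : EuclideanSpace ℝ (Fin n) := t⁻¹ • (q - p) with hudef
  have hu : ‖u‖ = 1 := by
    rw [hudef, norm_smul, Real.norm_eq_abs, abs_of_pos (inv_pos.2 ht)]
    rw [show ‖q - p‖ = dist q p from (dist_eq_norm q p).symm, dist_comm, ← htdef]
    field_simp
  have hqeq : q = p + t • u := by
    rw [hudef, smul_smul, mul_inv_cancel₀ ht.ne']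
    simp
  set f : ℝ → EuclideanSpace ℝ (Fin n) := fun s => p + s • u with hfdef
  have hfcont : Continuous f := by
    apply continuous_const.add
    exact continuous_id.smul continuous_const
  set S : Set ℝ := f ⁻¹' X with hSdef
  have hSopen : IsOpen S := hopen.preimage hfcont
  have h0S : (0:ℝ) ∈ S := by simp [hSdef, hfdef, hp]
  have htS : t ∈ S := by
    simp only [hSdef, hfdef, Set.mem_preimage]
    rw [← hqeq]; exact hq
  obtain ⟨C, hC⟩ := Metric.isBounded_iff.1 hbdd
  have habs : ∀ s ∈ S, |s| ≤ C := by
    intro s hs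
    have h1 : dist (f s) (f 0) ≤ C := hC hs h0S
    have : dist (f s) (f 0) = |s| := by
      simp only [hfdef]
      rw [dist_line hu p s 0, sub_zero]
    linarith [this ▸ h1]
  have hbdda : BddAbove S := ⟨C, fun s hs => (le_abs_self s).trans (habs s hs)⟩
  have hbddb : BddBelow S := ⟨-C, fun s hs => by linarith [neg_abs_le s, habs s hs]⟩
  set b := sSup S with hbdef
  set a := -(sInf S) with hadef
  have hnotmem_sup : b ∉ S := by
    intro hmem
    obtain ⟨ε, hε, hball⟩ := Metric.isOpen_iff.1 hSopen b hmem
    have : b + ε/2 ∈ S := by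
      apply hball
      rw [Metric.mem_ball, Real.dist_eq, show b + ε/2 - b = ε/2 by ring, abs_of_pos (by linarith)]
      linarith
    linarith [le_csSup hbdda this]
  have hnotmem_inf : sInf S ∉ S := by
    intro hmem
    obtain ⟨ε, hε, hball⟩ := Metric.isOpen_iff.1 hSopen _ hmem
    have : sInf S - ε/2 ∈ S := by
      apply hball
      rw [Metric.mem_ball, Real.dist_eq, show sInf S - ε/2 - sInf S = -(ε/2) by ring,
        abs_of_neg (by linarith), neg_neg]
      linarith
    linarith [csInf_le hbddb this]
  have htb : t < b := lt_of_le_of_ne (le_csSup hbdda htS) (fun h => hnotmem_sup (h ▸ htS))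
  have ha : 0 < a := by
    rw [hadef, neg_pos]
    exact lt_of_le_of_ne (csInf_le hbddb h0S) (fun h => hnotmem_inf (h ▸ h0S))
  have hfrontier_eq : frontier X = closure X \ X := by
    rw [hopen.frontier_eq]
  have hbfr : p + b • u ∈ frontier X := by
    rw [hfrontier_eq, Set.mem_diff]
    constructor
    · have hb1 : b ∈ closure S := csSup_mem_closure ⟨0, h0S⟩ hbdda
      have := hfcont.closure_preimage_subset X (hSdef ▸ hb1)
      exact this
    · exact hnotmem_sup
  have hafr : p + (-a) • u ∈ frontier X := by
    rw [hfrontier_eq, Set.mem_diff]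
    constructor
    · have hb1 : sInf S ∈ closure S := csInf_mem_closure ⟨0, h0S⟩ hbddb
      have := hfcont.closure_preimage_subset X (hSdef ▸ hb1)
      rw [hadef, neg_neg]
      exact this
    · rw [hadef, neg_neg]; exact hnotmem_inf
  have hb0 : 0 < b := ht.trans htb
  refine ⟨u, a, b, hu, ha, htb, hqeq, hafr, hbfr, ?_⟩
  intro s hs0 hsb
  have hzX : p + s • u ∈ X := by
    have := hconv.combo_interior_closure_mem_interior
      (x := p) (y := p + b • u)
      (by rw [hopen.interior_eq]; exact hp)
      (frontier_subset_closure hbfr)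
      (a := 1 - s/b) (b := s/b)
      (by have : s/b < 1 := (div_lt_one hb0).2 hsb; linarith)
      (div_nonneg hs0.le hb0.le) (by ring)
    rw [hopen.interior_eq] at this
    have heq : (1 - s/b) • p + (s/b) • (p + b • u) = p + s • u := by
      nth_rewrite 1 [show p = p + (0:ℝ) • u by simp]
      rw [combo_line p u 0 b (by ring)]
      congr 2
      field_simp
      ring
    rwa [heq] at this
  refine ⟨hzX, ?_⟩
  have hpz : p ≠ p + s • u := by
    intro h
    have : s • u = 0 := by
      have := h.symm
      rwa [add_eq_left] at this
    rcases smul_eq_zero.1 this with h' | h'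
    · exact hs0.ne' h'
    · rw [h'] at hu; simp at hu
  have hseg1 : p ∈ segment ℝ (p + (-a) • u) (p + s • u) := by
    simpa using mem_segment_line p u (s1 := -a) (s2 := 0) (s3 := s) (by linarith) hs0.le
  have hseg2 : p + s • u ∈ segment ℝ p (p + b • u) := by
    simpa using mem_segment_line p u (s1 := 0) (s2 := s) (s3 := b) hs0.le hsb.le
  have hval := hd.2 p hp _ hzX hpz _ hafr _ hbfr hseg1 hseg2
  rw [hval]
  have e1 : dist p (p + b • u) = b := by
    have h := dist_line hu p 0 b
    simp only [zero_smul, add_zero] at h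
    rw [h, abs_of_nonpos (by linarith), neg_sub, sub_zero]
  have e2 : dist (p + s • u) (p + (-a) • u) = a + s := by
    rw [dist_line hu p s (-a), abs_of_pos (by linarith)]; ring
  have e3 : dist p (p + (-a) • u) = a := by
    have h := dist_line hu p 0 (-a)
    simp only [zero_smul, add_zero] at h
    rw [h, abs_of_pos (by linarith)]; ring
  have e4 : dist (p + s • u) (p + b • u) = b - s := by
    rw [dist_line hu p s b, abs_of_neg (by linarith), neg_sub]
  rw [e1, e2, e3, e4]


private lemma hilbert_symm (hconv : Convex ℝ X) (hopen : IsOpen X)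
    (hbdd : Bornology.IsBounded X) (hd : IsHilbertMetric X d)
    {p q : EuclideanSpace ℝ (Fin n)} (hp : p ∈ X) (hq : q ∈ X) :
    d p q = d q p := by
  by_cases hpq : p = q
  · rw [hpq]
  · obtain ⟨u, a, b, hu, ha, htb, hqeq, hafr, hbfr, hline⟩ := chord hconv hopen hbdd hd hp hq hpq
    set t := dist p q with htdef
    have ht : 0 < t := dist_pos.2 hpq
    obtain ⟨_, hdpq⟩ := hline t ht htb
    rw [← hqeq] at hdpq
    have hseg1 : q ∈ segment ℝ (p + b • u) p := by
      rw [segment_symm]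
      rw [hqeq]
      simpa using mem_segment_line p u (s1 := 0) (s2 := t) (s3 := b) ht.le htb.le
    have hseg2 : p ∈ segment ℝ q (p + (-a) • u) := by
      rw [segment_symm, hqeq]
      simpa using mem_segment_line p u (s1 := -a) (s2 := 0) (s3 := t) (by linarith) ht.le
    have hval := hd.2 q hq p hp (Ne.symm hpq) _ hbfr _ hafr hseg1 hseg2
    have e1 : dist q (p + (-a) • u) = a + t := by
      rw [hqeq, dist_line hu p t (-a), abs_of_pos (by linarith)]; ring
    have e2 : dist p (p + b • u) = b := by
      have h := dist_line hu p 0 b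
      simp only [zero_smul, add_zero] at h
      rw [h, abs_of_nonpos (by linarith), neg_sub, sub_zero]
    have e3 : dist q (p + b • u) = b - t := by
      rw [hqeq, dist_line hu p t b, abs_of_neg (by linarith), neg_sub]
    have e4 : dist p (p + (-a) • u) = a := by
      have h := dist_line hu p 0 (-a)
      simp only [zero_smul, add_zero] at h
      rw [h, abs_of_pos (by linarith)]; ring
    rw [hval, e1, e2, e3, e4, hdpq]
    congr 1
    ring

private lemma hilbert_nonneg (hconv : Convex ℝ X) (hopen : IsOpen X)
    (hbdd : Bornology.IsBounded X) (hd : IsHilbertMetric X d)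
    {p q : EuclideanSpace ℝ (Fin n)} (hp : p ∈ X) (hq : q ∈ X) :
    0 ≤ d p q := by
  by_cases hpq : p = q
  · rw [hpq, hd.1 q hq]
  · obtain ⟨u, a, b, hu, ha, htb, hqeq, hafr, hbfr, hline⟩ := chord hconv hopen hbdd hd hp hq hpq
    set t := dist p q with htdef
    have ht : 0 < t := dist_pos.2 hpq
    obtain ⟨_, hdpq⟩ := hline t ht htb
    rw [← hqeq] at hdpq
    rw [hdpq]
    apply Real.log_nonneg
    rw [le_div_iff₀ (by nlinarith)]
    nlinarith

private lemma ratio_le {f : EuclideanSpace ℝ (Fin n) →L[ℝ] ℝ} {k : ℝ}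
    (hfk : ∀ z ∈ closure X, f z ≤ k) {pp cc w : EuclideanSpace ℝ (Fin n)}
    (hw : w ∈ closure X) (hseg : cc ∈ segment ℝ pp w) :
    (k - f pp) * dist cc w ≤ (k - f cc) * dist pp w := by
  obtain ⟨α, β, hα, hβ, hαβ, hcc⟩ := hseg
  have hv : α • pp + β • w - w = α • (pp - w) := by
    match_scalars <;> ring_nf <;> linarith
  have h1 : dist cc w = α * dist pp w := by
    rw [dist_eq_norm, dist_eq_norm, ← hcc, hv, norm_smul, Real.norm_eq_abs, abs_of_nonneg hα]
  have hfval : f cc = α * f pp + β * f w := by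
    rw [← hcc]
    simp [map_add, map_smul]
  have hwk : f w ≤ k := hfk w hw
  have h2 : α * (k - f pp) ≤ k - f cc := by
    have hk : α * k + β * k = k := by rw [← add_mul, hαβ, one_mul]
    rw [hfval]
    nlinarith [mul_nonneg hβ (sub_nonneg.2 hwk)]
  calc (k - f pp) * dist cc w = (α * (k - f pp)) * dist pp w := by rw [h1]; ring
    _ ≤ (k - f cc) * dist pp w := mul_le_mul_of_nonneg_right h2 dist_nonneg


private lemma hilbert_tri (hconv : Convex ℝ X) (hopen : IsOpen X)
    (hbdd : Bornology.IsBounded X) (hd : IsHilbertMetric X d)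
    {p q c : EuclideanSpace ℝ (Fin n)} (hp : p ∈ X) (hq : q ∈ X) (hc : c ∈ X) :
    d p q ≤ d p c + d c q := by
  by_cases hpq : p = q
  · rw [hpq, hd.1 q hq]
    exact add_nonneg (hilbert_nonneg hconv hopen hbdd hd hq hc)
      (hilbert_nonneg hconv hopen hbdd hd hc hq)
  by_cases hcp : c = p
  · rw [hcp, hd.1 p hp, zero_add]
  by_cases hcq : c = q
  · rw [hcq, hd.1 q hq, add_zero]
  obtain ⟨u, a, b, hu, ha, htb, hqe, hPfr, hQfr, hline⟩ := chord hconv hopen hbdd hd hp hq hpq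
  set t := dist p q with htdef
  have ht : 0 < t := dist_pos.2 hpq
  obtain ⟨-, hdpq⟩ := hline t ht htb
  rw [← hqe] at hdpq
  obtain ⟨u1, a1, b1, hu1, ha1, hTb1, hce, hC1fr, hC2fr, hline1⟩ :=
    chord hconv hopen hbdd hd hp hc (fun h => hcp h.symm)
  set T := dist p c with hTdef
  have hT : 0 < T := dist_pos.2 (fun h => hcp h.symm)
  obtain ⟨-, hdpc⟩ := hline1 T hT hTb1
  rw [← hce] at hdpc
  obtain ⟨u2, a2, b2, hu2, ha2, hT2b2, hqe2, hD1fr, hD2fr, hline2⟩ :=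
    chord hconv hopen hbdd hd hc hq hcq
  set T2 := dist c q with hT2def
  have hT2 : 0 < T2 := dist_pos.2 hcq
  obtain ⟨-, hdcq⟩ := hline2 T2 hT2 hT2b2
  rw [← hqe2] at hdcq
  have hb : 0 < b := ht.trans htb
  have hb1 : 0 < b1 := hT.trans hTb1
  have hb2 : 0 < b2 := hT2.trans hT2b2
  -- Hahn-Banach functionals at the two endpoints of the p-q chord
  have hQX : p + b • u ∉ X := by rw [hopen.frontier_eq] at hQfr; exact hQfr.2
  obtain ⟨f, hf⟩ := geometric_hahn_banach_open_point hconv hopen hQX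
  set k := f (p + b • u) with hkdef
  have hfcl : ∀ z ∈ closure X, f z ≤ k := by
    intro z hz
    exact closure_minimal (fun w hw => (hf w hw).le)
      (isClosed_le f.continuous continuous_const) hz
  have hPX : p + (-a) • u ∉ X := by rw [hopen.frontier_eq] at hPfr; exact hPfr.2
  obtain ⟨g, hg⟩ := geometric_hahn_banach_open_point hconv hopen hPX
  set k' := g (p + (-a) • u) with hk'def
  have hgcl : ∀ z ∈ closure X, g z ≤ k' := by
    intro z hz
    exact closure_minimal (fun w hw => (hg w hw).le)
      (isClosed_le g.continuous continuous_const) hz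
  -- values of the functionals along the p-q chord
  set μ := f u with hμdef
  have hfp : k - f p = b * μ := by
    rw [hkdef, map_add, map_smul, smul_eq_mul, hμdef]; ring
  have hfq : k - f q = (b - t) * μ := by
    rw [hkdef, hqe, map_add, map_add, map_smul, map_smul, smul_eq_mul, smul_eq_mul, hμdef]; ring
  have hμ : 0 < μ := by
    have h0 : 0 < k - f p := sub_pos.2 (hf p hp)
    rw [hfp] at h0
    rcases mul_pos_iff.1 h0 with ⟨-, h⟩ | ⟨h, -⟩
    · exact h
    · linarith
  set ν := -(g u) with hνdef
  have hgp : k' - g p = a * ν := by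
    rw [hk'def, map_add, map_smul, smul_eq_mul, hνdef]; ring
  have hgq : k' - g q = (a + t) * ν := by
    rw [hk'def, hqe, map_add, map_add, map_smul, map_smul, smul_eq_mul, smul_eq_mul, hνdef]; ring
  have hν : 0 < ν := by
    have h0 : 0 < k' - g p := sub_pos.2 (hg p hp)
    rw [hgp] at h0
    rcases mul_pos_iff.1 h0 with ⟨-, h⟩ | ⟨h, -⟩
    · exact h
    · linarith
  have hfc : 0 < k - f c := sub_pos.2 (hf c hc)
  have hgc : 0 < k' - g c := sub_pos.2 (hg c hc)
  have hfq' : 0 < k - f q := sub_pos.2 (hf q hq)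
  have hgp' : 0 < k' - g p := sub_pos.2 (hg p hp)
  -- distance evaluations along the p-c chord
  have dc2 : dist c (p + b1 • u1) = b1 - T := by
    rw [hce, dist_line hu1 p T b1, abs_of_neg (by linarith), neg_sub]
  have dp2 : dist p (p + b1 • u1) = b1 := by
    have h := dist_line hu1 p 0 b1
    simp only [zero_smul, add_zero] at h
    rw [h, abs_of_nonpos (by linarith), neg_sub, sub_zero]
  have dp1 : dist p (p + (-a1) • u1) = a1 := by
    have h := dist_line hu1 p 0 (-a1)
    simp only [zero_smul, add_zero] at h
    rw [h, abs_of_pos (by linarith)]; ring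
  have dc1 : dist c (p + (-a1) • u1) = a1 + T := by
    rw [hce, dist_line hu1 p T (-a1), abs_of_pos (by linarith)]; ring
  -- distance evaluations along the c-q chord
  have dq2' : dist q (c + b2 • u2) = b2 - T2 := by
    rw [hqe2, dist_line hu2 c T2 b2, abs_of_neg (by linarith), neg_sub]
  have dc2' : dist c (c + b2 • u2) = b2 := by
    have h := dist_line hu2 c 0 b2
    simp only [zero_smul, add_zero] at h
    rw [h, abs_of_nonpos (by linarith), neg_sub, sub_zero]
  have dc1' : dist c (c + (-a2) • u2) = a2 := by
    have h := dist_line hu2 c 0 (-a2)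
    simp only [zero_smul, add_zero] at h
    rw [h, abs_of_pos (by linarith)]; ring
  have dq1' : dist q (c + (-a2) • u2) = a2 + T2 := by
    rw [hqe2, dist_line hu2 c T2 (-a2), abs_of_pos (by linarith)]; ring
  -- segment memberships
  have segi : c ∈ segment ℝ p (p + b1 • u1) := by
    rw [hce]
    simpa using mem_segment_line p u1 (s1 := 0) (s2 := T) (s3 := b1) hT.le hTb1.le
  have segii : p ∈ segment ℝ c (p + (-a1) • u1) := by
    rw [segment_symm, hce]
    simpa using mem_segment_line p u1 (s1 := -a1) (s2 := 0) (s3 := T) (by linarith) hT.le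
  have segiii : q ∈ segment ℝ c (c + b2 • u2) := by
    rw [hqe2]
    simpa using mem_segment_line c u2 (s1 := 0) (s2 := T2) (s3 := b2) hT2.le hT2b2.le
  have segiv : c ∈ segment ℝ q (c + (-a2) • u2) := by
    rw [segment_symm, hqe2]
    simpa using mem_segment_line c u2 (s1 := -a2) (s2 := 0) (s3 := T2) (by linarith) hT2.le
  -- the four ratio inequalities
  have hi := ratio_le hfcl (frontier_subset_closure hC2fr) segi
  rw [dc2, dp2] at hi
  have hii := ratio_le hgcl (frontier_subset_closure hC1fr) segii
  rw [dp1, dc1] at hii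
  have hiii := ratio_le hfcl (frontier_subset_closure hD2fr) segiii
  rw [dq2', dc2'] at hiii
  have hiv := ratio_le hgcl (frontier_subset_closure hD1fr) segiv
  rw [dc1', dq1'] at hiv
  -- combine
  have M1 : (k - f p) * ((b1 - T) * (b2 - T2)) ≤ (k - f q) * (b1 * b2) := by
    calc (k - f p) * ((b1 - T) * (b2 - T2)) = ((k - f p) * (b1 - T)) * (b2 - T2) := by ring
      _ ≤ ((k - f c) * b1) * (b2 - T2) := mul_le_mul_of_nonneg_right hi (sub_nonneg.2 hT2b2.le)
      _ = ((k - f c) * (b2 - T2)) * b1 := by ring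
      _ ≤ ((k - f q) * b2) * b1 := mul_le_mul_of_nonneg_right hiii hb1.le
      _ = (k - f q) * (b1 * b2) := by ring
  have M2 : (k' - g q) * (a1 * a2) ≤ (k' - g p) * ((a1 + T) * (a2 + T2)) := by
    calc (k' - g q) * (a1 * a2) = ((k' - g q) * a2) * a1 := by ring
      _ ≤ ((k' - g c) * (a2 + T2)) * a1 := mul_le_mul_of_nonneg_right hiv ha1.le
      _ = ((k' - g c) * a1) * (a2 + T2) := by ring
      _ ≤ ((k' - g p) * (a1 + T)) * (a2 + T2) := mul_le_mul_of_nonneg_right hii (add_pos ha2 hT2).le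
      _ = (k' - g p) * ((a1 + T) * (a2 + T2)) := by ring
  have M : ((k - f p) * ((b1 - T) * (b2 - T2))) * ((k' - g q) * (a1 * a2)) ≤
      ((k - f q) * (b1 * b2)) * ((k' - g p) * ((a1 + T) * (a2 + T2))) := by
    have hgq' : 0 < k' - g q := sub_pos.2 (hg q hq)
    exact mul_le_mul M1 M2
      (mul_nonneg hgq'.le (mul_nonneg ha1.le ha2.le))
      (mul_nonneg hfq'.le (mul_nonneg hb1.le hb2.le))
  rw [hfp, hfq, hgp, hgq] at M
  -- conclude
  rw [hdpq, hdpc, hdcq]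
  have hV1 : 0 < b1 * (a1 + T) / (a1 * (b1 - T)) :=
    div_pos (mul_pos hb1 (add_pos ha1 hT)) (mul_pos ha1 (sub_pos.2 hTb1))
  have hV2 : 0 < b2 * (a2 + T2) / (a2 * (b2 - T2)) :=
    div_pos (mul_pos hb2 (add_pos ha2 hT2)) (mul_pos ha2 (sub_pos.2 hT2b2))
  have hV : 0 < b * (a + t) / (a * (b - t)) :=
    div_pos (mul_pos hb (add_pos ha ht)) (mul_pos ha (sub_pos.2 htb))
  rw [← Real.log_mul hV1.ne' hV2.ne']
  apply Real.log_le_log hV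
  rw [div_mul_div_comm, div_le_div_iff₀ (mul_pos ha (sub_pos.2 htb))
    (mul_pos (mul_pos ha1 (sub_pos.2 hTb1)) (mul_pos ha2 (sub_pos.2 hT2b2)))]
  have hμν : 0 < μ * ν := mul_pos hμ hν
  refine le_of_mul_le_mul_right ?_ hμν
  calc _ = (b * μ * ((b1 - T) * (b2 - T2))) * ((a + t) * ν * (a1 * a2)) := by ring
    _ ≤ ((b - t) * μ * (b1 * b2)) * (a * ν * ((a1 + T) * (a2 + T2))) := M
    _ = _ := by ring

end helpers

theorem hilbert_ball_homothety
    {n : ℕ} (hn : 2 ≤ n) (X : Set (EuclideanSpace ℝ (Fin n)))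
    (hne : X.Nonempty) (hconv : Convex ℝ X) (hopen : IsOpen X)
    (hbdd : Bornology.IsBounded X)
    (d : EuclideanSpace ℝ (Fin n) → EuclideanSpace ℝ (Fin n) → ℝ)
    (hd : IsHilbertMetric X d)
    (r R : ℝ) (hr : 0 < r) (hR : 0 < R)
    (x : EuclideanSpace ℝ (Fin n)) (hx : x ∈ X)
    (c : EuclideanSpace ℝ (Fin n)) (hc : c ∈ X)
    (hsub : ∀ z ∈ X, d x z ≤ r → d c z ≤ R)
    (y : EuclideanSpace ℝ (Fin n)) (hy : y ∈ X) (hyR : d c y ≤ R) :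
    x + ((Real.exp r - 1) / (Real.exp (2 * R) - 1)) • (y - x) ∈ X ∧
    d x (x + ((Real.exp r - 1) / (Real.exp (2 * R) - 1)) • (y - x)) ≤ r := by
  by_cases hxy : x = y
  · rw [← hxy, sub_self, smul_zero, add_zero]
    exact ⟨hx, by rw [hd.1 x hx]; exact hr.le⟩
  · obtain ⟨u, a, b, hu, ha, htb, hye, hPfr, hQfr, hline⟩ := chord hconv hopen hbdd hd hx hy hxy
    set t := dist x y with htdef
    have ht : 0 < t := dist_pos.2 hxy
    have hb : 0 < b := ht.trans htb
    have hdcx : d c x ≤ R := hsub x hx (by rw [hd.1 x hx]; exact hr.le)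
    have hdxc : d x c ≤ R := by
      rw [hilbert_symm hconv hopen hbdd hd hx hc]; exact hdcx
    set er := Real.exp r with herdef
    have her : 1 < er := by
      rw [herdef]
      have := Real.exp_lt_exp.2 hr
      rwa [Real.exp_zero] at this
    -- a point at distance exactly r from x on the chord
    have hden : 0 < b + er * a := add_pos hb (mul_pos (by linarith) ha)
    set sr := (er - 1) * a * b / (b + er * a) with hsrdef
    have hsr0 : 0 < sr := div_pos (mul_pos (mul_pos (by linarith) ha) hb) hden
    have hsrb : sr < b := by
      rw [hsrdef, div_lt_iff₀ hden]
      nlinarith [mul_pos ha hb, mul_pos hb hb]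
    obtain ⟨hzrX, hdzr⟩ := hline sr hsr0 hsrb
    have hdzr' : d x (x + sr • u) = r := by
      rw [hdzr]
      have harg : b * (a + sr) / (a * (b - sr)) = er := by
        rw [div_eq_iff (ne_of_gt (mul_pos ha (sub_pos.2 hsrb))), hsrdef]
        field_simp
        ring
      rw [harg, herdef, Real.log_exp]
    have hr2R : r ≤ 2 * R := by
      have h1 := hilbert_tri hconv hopen hbdd hd hx hzrX hc
      have h2 : d c (x + sr • u) ≤ R := hsub _ hzrX (le_of_eq hdzr')
      rw [hdzr'] at h1
      linarith
    set E2 := Real.exp (2 * R) with hE2def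
    have herE : er ≤ E2 := by
      rw [herdef, hE2def]; exact Real.exp_le_exp.2 hr2R
    have hE2 : 1 < E2 := lt_of_lt_of_le her herE
    -- bound on d x y
    have hdxy2R : d x y ≤ 2 * R := by
      have h1 := hilbert_tri hconv hopen hbdd hd hx hy hc
      linarith
    obtain ⟨-, hdxy⟩ := hline t ht htb
    rw [← hye] at hdxy
    have h0 : 0 < a * (b - t) := mul_pos ha (sub_pos.2 htb)
    have hratio : b * (a + t) ≤ E2 * (a * (b - t)) := by
      have hlog : Real.log (b * (a + t) / (a * (b - t))) ≤ 2 * R := by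
        rw [← hdxy]; exact hdxy2R
      have h2 := (Real.log_le_iff_le_exp
        (div_pos (mul_pos hb (add_pos ha ht)) h0)).1 hlog
      rw [← hE2def] at h2
      rwa [div_le_iff₀ h0] at h2
    -- the homothety point
    set D := (er - 1) / (E2 - 1) with hDdef
    have hD0 : 0 < D := div_pos (by linarith) (by linarith)
    have hD1 : D ≤ 1 := (div_le_one (by linarith)).2 (by linarith)
    have hyx : y - x = t • u := by rw [hye, add_sub_cancel_left]
    have hpt : x + D • (y - x) = x + (D * t) • u := by rw [hyx, smul_smul]
    have hs0 : 0 < D * t := mul_pos hD0 ht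
    have hst : D * t ≤ t := by nlinarith
    have hsb : D * t < b := lt_of_le_of_lt hst htb
    obtain ⟨hzX, hdz⟩ := hline (D * t) hs0 hsb
    rw [hpt]
    refine ⟨hzX, ?_⟩
    rw [hdz]
    have hpos : 0 < a * (b - D * t) := mul_pos ha (sub_pos.2 hsb)
    have hnum : 0 < a + D * t := by linarith
    rw [Real.log_le_iff_le_exp (div_pos (mul_pos hb hnum) hpos), ← herdef,
      div_le_iff₀ hpos]
    -- goal : b * (a + D * t) ≤ er * (a * (b - D * t))
    have hDE : D * (E2 - 1) = er - 1 := by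
      rw [hDdef, div_mul_cancel₀ _ (by linarith : E2 - 1 ≠ 0)]
    have h5 : D * (E2 - 1) * (a * b) = (er - 1) * (a * b) := by rw [hDE]
    have hint1 := mul_le_mul_of_nonneg_left hratio hD0.le
    have hint2 : 0 ≤ D * t * a * (E2 - er) :=
      mul_nonneg (mul_nonneg (mul_nonneg hD0.le ht.le) ha.le) (sub_nonneg.2 herE)
    nlinarith [hint1, h5, hint2]
end

section
/- Let (X,d) be a Hilbert geometry whose closure is strictly convex in ℝⁿ, with base point o ∈ X. For any C > 0 and δ > 0, the set M = {x ∈ X : ∃ y ∈ X with |xy| ≥ δ and d(x,y) ≤ C} is bounded with respect to d. Consequently, for any x, y ∈ X with x ∉ M and d(x,y) ≤ C one has |xy| < δ. -/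
open Real

open Metric Bornology

variable {n : ℕ}


/-- Along the ray from `y` through `x` (beyond `x`), there is a frontier point `x'`
with `x ∈ segment x' y`. -/
lemma aux_exists_beyond {X : Set (EuclideanSpace ℝ (Fin n))}
    (hbdd : IsBounded X) (hopen : IsOpen X)
    {x y : EuclideanSpace ℝ (Fin n)} (hx : x ∈ X) (hxy : x ≠ y) :
    ∃ x' ∈ frontier X, x ∈ segment ℝ x' y := by
  set v : EuclideanSpace ℝ (Fin n) := x - y with hv
  have hvne : v ≠ 0 := sub_ne_zero.mpr hxy
  have hvnorm : 0 < ‖v‖ := norm_pos_iff.mpr hvne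
  set g : ℝ → EuclideanSpace ℝ (Fin n) := fun t => x + t • v with hg
  have hgc : Continuous g := by
    apply continuous_const.add (continuous_id.smul continuous_const)
  set S : Set ℝ := {t : ℝ | 0 ≤ t ∧ g t ∈ closure X} with hS
  have hS0 : (0:ℝ) ∈ S := by
    refine ⟨le_refl _, ?_⟩
    simp only [hg, zero_smul, add_zero]
    exact subset_closure hx
  obtain ⟨R, hR⟩ := (hbdd.closure).subset_closedBall 0
  have hSbdd : BddAbove S := by
    refine ⟨(R + ‖x‖) / ‖v‖, fun t ht => ?_⟩
    have h1 : ‖g t‖ ≤ R := by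
      have := hR ht.2
      simpa [Metric.mem_closedBall, dist_zero_right] using this
    have h2 : t * ‖v‖ = ‖g t - x‖ := by
      simp [hg, norm_smul, abs_of_nonneg ht.1]
    have h3 : ‖g t - x‖ ≤ R + ‖x‖ := by
      calc ‖g t - x‖ ≤ ‖g t‖ + ‖x‖ := norm_sub_le _ _
        _ ≤ R + ‖x‖ := by linarith
    rw [le_div_iff₀ hvnorm]
    linarith [h2 ▸ h3]
  have hSclosed : IsClosed S := by
    have : S = Set.Ici (0:ℝ) ∩ g ⁻¹' closure X := by
      ext t; simp [hS, Set.mem_Ici, and_comm]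
    rw [this]
    exact isClosed_Ici.inter (isClosed_closure.preimage hgc)
  set T := sSup S with hT
  have hTS : T ∈ S := hSclosed.csSup_mem ⟨0, hS0⟩ hSbdd
  have hT0 : 0 ≤ T := hTS.1
  refine ⟨g T, ⟨hTS.2, ?_⟩, ?_⟩
  · -- g T ∉ interior X
    rw [hopen.interior_eq]
    intro hmem
    have hU : IsOpen (g ⁻¹' X) := hopen.preimage hgc
    obtain ⟨ε, hε, hball⟩ := Metric.isOpen_iff.1 hU T hmem
    have hTε : T + ε / 2 ∈ S := by
      refine ⟨by linarith, subset_closure (hball ?_)⟩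
      rw [Metric.mem_ball, Real.dist_eq, show T + ε / 2 - T = ε / 2 by ring,
        abs_of_pos (by linarith)]
      linarith
    have := le_csSup hSbdd hTε
    linarith
  · -- x ∈ segment (g T) y
    refine ⟨1 / (1 + T), T / (1 + T), by positivity, by positivity, by field_simp, ?_⟩
    have h1T : (1 + T) ≠ 0 := by positivity
    have : (1 / (1 + T)) • (x + T • (x - y)) + (T / (1 + T)) • y = x := by
      rw [smul_add, smul_smul]
      have e1 : (1 / (1 + T)) • x + (1 / (1 + T) * T) • (x - y) + (T / (1 + T)) • y
          = (1 / (1 + T) + 1 / (1 + T) * T) • x + (T / (1 + T) - 1 / (1 + T) * T) • y := by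
        rw [smul_sub, add_smul, sub_smul]; abel
      rw [e1]
      have e2 : 1 / (1 + T) + 1 / (1 + T) * T = 1 := by field_simp
      have e3 : T / (1 + T) - 1 / (1 + T) * T = 0 := by field_simp; ring
      rw [e2, e3, one_smul, zero_smul, add_zero]
    simpa [hg, hv] using this

/-- For an open convex set, the interior of the closure is the set itself. -/
lemma aux_interior_closure_subset {X : Set (EuclideanSpace ℝ (Fin n))}
    (hconv : Convex ℝ X) (hopen : IsOpen X) (hne : X.Nonempty) :
    interior (closure X) ⊆ X := by
  obtain ⟨o, ho⟩ := hne
  intro z hz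
  rcases eq_or_ne z o with rfl | hzo
  · exact ho
  obtain ⟨r, hr, hball⟩ := Metric.isOpen_iff.1 isOpen_interior z hz
  set t : ℝ := r / (2 * (‖z - o‖ + 1)) with ht
  have hzon : 0 < ‖z - o‖ := norm_pos_iff.mpr (sub_ne_zero.mpr hzo)
  have htpos : 0 < t := by positivity
  set w : EuclideanSpace ℝ (Fin n) := z + t • (z - o) with hw
  have hwmem : w ∈ closure X := by
    refine interior_subset (hball ?_)
    simp only [hw, Metric.mem_ball, dist_self_add_left, norm_smul,
      Real.norm_eq_abs, abs_of_pos htpos]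
    calc t * ‖z - o‖ < t * (2 * (‖z - o‖ + 1)) := by
          apply mul_lt_mul_of_pos_left _ htpos; nlinarith
      _ = r := by rw [ht]; field_simp
  have hinterior : o ∈ interior X := by rw [hopen.interior_eq]; exact ho
  have hseg : z ∈ openSegment ℝ o w := by
    refine ⟨t / (1 + t), 1 / (1 + t), by positivity, by positivity, by field_simp; ring, ?_⟩
    have h1t : (1 + t) ≠ 0 := by positivity
    rw [hw, smul_add, smul_smul, smul_sub]
    have e1 : (t / (1 + t)) • o + ((1 / (1 + t)) • z + ((1 / (1 + t) * t) • z - (1 / (1 + t) * t) • o))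
        = (1 / (1 + t) + 1 / (1 + t) * t) • z + (t / (1 + t) - 1 / (1 + t) * t) • o := by
      rw [add_smul, sub_smul]; abel
    rw [e1]
    have e2 : 1 / (1 + t) + 1 / (1 + t) * t = 1 := by field_simp
    have e3 : t / (1 + t) - 1 / (1 + t) * t = 0 := by field_simp; ring
    rw [e2, e3, one_smul, zero_smul, add_zero]
  have := hconv.openSegment_interior_closure_subset_interior hinterior hwmem hseg
  rwa [hopen.interior_eq] at this


set_option maxHeartbeats 1000000 in
lemma aux_eps {X : Set (EuclideanSpace ℝ (Fin n))}
    (hconv : Convex ℝ X) (hopen : IsOpen X) (hbdd : IsBounded X) (hne : X.Nonempty)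
    (hstrict : StrictConvex ℝ (closure X)) (hfr : (frontier X).Nonempty)
    {c δ : ℝ} (hc : 0 < c) (hδ : 0 < δ) :
    ∃ ε > 0, ∀ x' x q : EuclideanSpace ℝ (Fin n), x' ∈ closure X → q ∈ closure X →
      x ∈ segment ℝ x' q → c ≤ dist x x' → δ ≤ dist x q →
      ε ≤ Metric.infDist x (frontier X) := by
  classical
  set T : Set (EuclideanSpace ℝ (Fin n) × EuclideanSpace ℝ (Fin n) × EuclideanSpace ℝ (Fin n)) := {p | p.1 ∈ closure X ∧ p.2.2 ∈ closure X ∧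
    dist p.1 p.2.1 + dist p.2.1 p.2.2 = dist p.1 p.2.2 ∧
    c ≤ dist p.2.1 p.1 ∧ δ ≤ dist p.2.1 p.2.2} with hTdef
  have hmemseg : ∀ p ∈ T, p.2.1 ∈ segment ℝ p.1 p.2.2 := by
    intro p hp
    exact mem_segment_iff_wbtw.2 (dist_add_dist_eq_iff.1 hp.2.2.1)
  have hTclosed : IsClosed T := by
    rw [hTdef]
    simp only [Set.setOf_and]
    refine (isClosed_closure.preimage continuous_fst).inter
      ((isClosed_closure.preimage (continuous_snd.comp continuous_snd)).inter
        ((isClosed_eq (by fun_prop) (by fun_prop)).inter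
          ((isClosed_le continuous_const (by fun_prop)).inter
            (isClosed_le continuous_const (by fun_prop)))))
  have hTsub : T ⊆ (closure X) ×ˢ ((closure X) ×ˢ (closure X)) := by
    intro p hp
    exact ⟨hp.1, hconv.closure.segment_subset hp.1 hp.2.1 (hmemseg p hp), hp.2.1⟩
  have hTcompact : IsCompact T :=
    Metric.isCompact_of_isClosed_isBounded hTclosed
      (((hbdd.closure).prod ((hbdd.closure).prod hbdd.closure)).subset hTsub)
  set f : EuclideanSpace ℝ (Fin n) × EuclideanSpace ℝ (Fin n) × EuclideanSpace ℝ (Fin n) → ℝ := fun p => Metric.infDist p.2.1 (frontier X) with hf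
  have hfc : Continuous f := (Metric.continuous_infDist_pt _).comp
    (continuous_fst.comp continuous_snd)
  have hpos : ∀ p ∈ T, 0 < f p := by
    rintro ⟨x', x, q⟩ hp
    obtain ⟨h1, h2, h3, h4, h5⟩ := hp
    have hseg : x ∈ segment ℝ x' q := hmemseg _ ⟨h1, h2, h3, h4, h5⟩
    have hne1 : x' ≠ x := by
      intro h; rw [h] at h4; simp at h4; linarith
    have hne2 : q ≠ x := by
      intro h; rw [h] at h5; simp [dist_comm] at h5; linarith
    have hne3 : x' ≠ q := by
      rintro rfl
      rw [segment_same] at hseg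
      exact hne1 hseg.symm
    have hxint : x ∈ interior (closure X) :=
      hstrict.openSegment_subset h1 h2 hne3
        (mem_openSegment_of_ne_left_right hne1 hne2 hseg)
    have hxX : x ∈ X := aux_interior_closure_subset hconv hopen hne hxint
    have hxfr : x ∉ frontier X := by
      rw [hopen.frontier_eq]
      exact fun h => h.2 hxX
    exact (isClosed_frontier.notMem_iff_infDist_pos hfr).1 hxfr
  by_cases hT : T.Nonempty
  · obtain ⟨p₀, hp₀, hmin⟩ := hTcompact.exists_isMinOn hT hfc.continuousOn
    refine ⟨f p₀, hpos p₀ hp₀, fun x' x q h1 h2 h3 h4 h5 => ?_⟩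
    have hmem : (x', x, q) ∈ T := by
      rw [hTdef]
      exact ⟨h1, h2, dist_add_dist_of_mem_segment h3, h4, h5⟩
    have h6 : f p₀ ≤ f (x', x, q) := hmin hmem
    exact h6
  · refine ⟨1, one_pos, fun x' x q h1 h2 h3 h4 h5 => absurd ?_ hT⟩
    refine ⟨(x', x, q), ?_⟩
    rw [hTdef]
    exact ⟨h1, h2, dist_add_dist_of_mem_segment h3, h4, h5⟩


set_option maxHeartbeats 1000000 in
theorem hilbert_key_lemma_strictly_convex
    {n : ℕ} (hn : 2 ≤ n) (X : Set (EuclideanSpace ℝ (Fin n)))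
    (hne : X.Nonempty) (hconv : Convex ℝ X) (hopen : IsOpen X)
    (hbdd : Bornology.IsBounded X)
    (d : EuclideanSpace ℝ (Fin n) → EuclideanSpace ℝ (Fin n) → ℝ)
    (hd : IsHilbertMetric X d)
    (hstrict : StrictConvex ℝ (closure X))
    (o : EuclideanSpace ℝ (Fin n)) (ho : o ∈ X)
    (C δ : ℝ) (hC : 0 < C) (hδ : 0 < δ) :
    (∃ K : ℝ, ∀ a ∈ {x | x ∈ X ∧ ∃ y ∈ X, δ ≤ dist x y ∧ d x y ≤ C},
       ∀ b ∈ {x | x ∈ X ∧ ∃ y ∈ X, δ ≤ dist x y ∧ d x y ≤ C}, d a b ≤ K) ∧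
    (∀ x ∈ X, ∀ y ∈ X,
       x ∉ {x | x ∈ X ∧ ∃ y ∈ X, δ ≤ dist x y ∧ d x y ≤ C} →
       d x y ≤ C → dist x y < δ) := by
  constructor
  swap
  · -- second part is immediate from the definition of M
    intro x hx y hy hxM hdxy
    by_contra hcon
    push_neg at hcon
    exact hxM ⟨hx, y, hy, hcon, hdxy⟩
  -- a second point of X, giving positive diameter and a nonempty frontier
  obtain ⟨r, hr, hball⟩ := Metric.isOpen_iff.1 hopen o ho
  set z : EuclideanSpace ℝ (Fin n) :=
    o + (r / 2) • EuclideanSpace.single (⟨0, by omega⟩ : Fin n) (1:ℝ) with hzdef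
  have hdzo : dist z o = r / 2 := by
    rw [hzdef, dist_self_add_left, norm_smul, EuclideanSpace.norm_single]
    rw [Real.norm_eq_abs, abs_of_pos (by linarith : (0:ℝ) < r/2), norm_one, mul_one]
  have hzX : z ∈ X := hball (by rw [Metric.mem_ball, hdzo]; linarith)
  have hzo : z ≠ o := by
    intro h; rw [h, dist_self] at hdzo; linarith
  have hfr : (frontier X).Nonempty := by
    obtain ⟨w, hw, _⟩ := aux_exists_beyond hbdd hopen hzX hzo
    exact ⟨w, hw⟩
  -- diameter bound
  set D := Metric.diam (closure X) with hD
  have hDle : ∀ a ∈ closure X, ∀ b ∈ closure X, dist a b ≤ D :=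
    fun a ha b hb => Metric.dist_le_diam_of_mem hbdd.closure ha hb
  have hDpos : 0 < D := by
    have := hDle z (subset_closure hzX) o (subset_closure ho)
    rw [hdzo] at this; linarith
  -- the constant c and the uniform distance ε to the frontier
  set c := δ * δ / (Real.exp C * D) with hc
  have hcpos : 0 < c := by
    have := Real.exp_pos C
    positivity
  obtain ⟨ε, hεpos, hεkey⟩ := aux_eps hconv hopen hbdd hne hstrict hfr hcpos hδ
  -- every point of M is at distance at least ε from the frontier
  have hM : ∀ x ∈ {x | x ∈ X ∧ ∃ y ∈ X, δ ≤ dist x y ∧ d x y ≤ C},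
      ∀ w ∈ frontier X, ε ≤ dist x w := by
    rintro x ⟨hxX, y, hyX, hdist, hdC⟩ w hw
    have hxy : x ≠ y := by
      intro h; rw [h, dist_self] at hdist; linarith
    obtain ⟨x', hx'f, hxseg⟩ := aux_exists_beyond hbdd hopen hxX hxy
    obtain ⟨y', hy'f, hyseg'⟩ := aux_exists_beyond hbdd hopen hyX hxy.symm
    have hyseg : y ∈ segment ℝ x y' := by rwa [segment_symm] at hyseg'
    have hxnf : x ∉ frontier X := by rw [hopen.frontier_eq]; exact fun h => h.2 hxX
    have hynf : y ∉ frontier X := by rw [hopen.frontier_eq]; exact fun h => h.2 hyX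
    have hxx' : 0 < dist x x' := dist_pos.2 (fun h => hxnf (h ▸ hx'f))
    have hyy' : 0 < dist y y' := dist_pos.2 (fun h => hynf (h ▸ hy'f))
    have h1 : dist x y + dist y y' = dist x y' := dist_add_dist_of_mem_segment hyseg
    have h2 : dist x' x + dist x y = dist x' y := dist_add_dist_of_mem_segment hxseg
    have hxy' : δ ≤ dist x y' := by
      have := dist_nonneg (x := y) (y := y'); linarith
    have hyx' : δ ≤ dist y x' := by
      rw [dist_comm]
      have := dist_nonneg (x := x') (y := x); linarith
    have hform := hd.2 x hxX y hyX hxy x' hx'f y' hy'f hxseg hyseg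
    set R := (dist x y' * dist y x') / (dist x x' * dist y y') with hR
    have hRpos : 0 < R := by
      have : 0 < dist x y' := lt_of_lt_of_le hδ hxy'
      have : 0 < dist y x' := lt_of_lt_of_le hδ hyx'
      positivity
    have hRle : R ≤ Real.exp C := by
      rw [← Real.log_le_iff_le_exp hRpos, ← hform]
      exact hdC
    have hyy'D : dist y y' ≤ D :=
      hDle y (subset_closure hyX) y' (frontier_subset_closure hy'f)
    -- deduce c ≤ dist x x'
    have hkey : c ≤ dist x x' := by
      rw [hc, div_le_iff₀ (by positivity)]
      have hmul : dist x y' * dist y x' ≤ Real.exp C * (dist x x' * dist y y') := by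
        rw [hR, div_le_iff₀ (by positivity)] at hRle
        linarith
      have h3 : δ * δ ≤ dist x y' * dist y x' := by
        nlinarith
      have h4 : Real.exp C * (dist x x' * dist y y') ≤ dist x x' * (Real.exp C * D) := by
        have := Real.exp_pos C
        nlinarith
      linarith
    have := hεkey x' x y (frontier_subset_closure hx'f) (subset_closure hyX)
      hxseg hkey hdist
    exact le_trans this (Metric.infDist_le_dist_of_mem hw)
  -- final bound
  refine ⟨max (Real.log (D * D / (ε * ε))) 0, ?_⟩
  rintro a ⟨haX, ya, hyaX, hya1, hya2⟩ b ⟨hbX, yb, hybX, hyb1, hyb2⟩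
  rcases eq_or_ne a b with rfl | hab
  · rw [hd.1 a haX]; exact le_max_right _ _
  obtain ⟨a', ha'f, haseg⟩ := aux_exists_beyond hbdd hopen haX hab
  obtain ⟨b', hb'f, hbseg'⟩ := aux_exists_beyond hbdd hopen hbX hab.symm
  have hbseg : b ∈ segment ℝ a b' := by rwa [segment_symm] at hbseg'
  have hform := hd.2 a haX b hbX hab a' ha'f b' hb'f haseg hbseg
  have hanf : a ∉ frontier X := by rw [hopen.frontier_eq]; exact fun h => h.2 haX
  have hbnf : b ∉ frontier X := by rw [hopen.frontier_eq]; exact fun h => h.2 hbX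
  have hab' : 0 < dist a b' := dist_pos.2 (fun h => hanf (h ▸ hb'f))
  have hba' : 0 < dist b a' := dist_pos.2 (fun h => hbnf (h ▸ ha'f))
  have haa' : ε ≤ dist a a' := hM a ⟨haX, ya, hyaX, hya1, hya2⟩ a' ha'f
  have hbb' : ε ≤ dist b b' := hM b ⟨hbX, yb, hybX, hyb1, hyb2⟩ b' hb'f
  have hab'D : dist a b' ≤ D :=
    hDle a (subset_closure haX) b' (frontier_subset_closure hb'f)
  have hba'D : dist b a' ≤ D :=
    hDle b (subset_closure hbX) a' (frontier_subset_closure ha'f)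
  rw [hform]
  have haa'pos : 0 < dist a a' := lt_of_lt_of_le hεpos haa'
  have hbb'pos : 0 < dist b b' := lt_of_lt_of_le hεpos hbb'
  have hratio : (dist a b' * dist b a') / (dist a a' * dist b b') ≤ D * D / (ε * ε) := by
    apply div_le_div₀ (by positivity)
      (by nlinarith [hab'.le, hba'.le])
      (mul_pos hεpos hεpos) (by nlinarith)
  have hnumpos : 0 < (dist a b' * dist b a') / (dist a a' * dist b b') :=
    div_pos (mul_pos hab' hba') (mul_pos haa'pos hbb'pos)
  exact le_trans (Real.log_le_log hnumpos hratio) (le_max_left _ _)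
end

section
/- Let (X,d) be a Hilbert geometry whose boundary ∂X contains a non-trivial segment [α,β], and let ξ, η be distinct points of the relative interior of [α,β]. Fix a base point o ∈ X. Then there exists a constant K such that for every x on the half-open segment [o,ξ) there exists y on [o,η) with d(x,y) ≤ K; in fact, one may take K = log(|ξβ||ηα|/(|ξα||ηβ|)) when |αξ| < |αη|, taking y so that the line through x and y is parallel to the line through α and β. -/
open Real

lemma dist_affine {n : ℕ} (a v : EuclideanSpace ℝ (Fin n)) (p q : ℝ) :
    dist (a + p • v) (a + q • v) = |p - q| * ‖v‖ := by
  rw [dist_eq_norm]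
  have h : (a + p • v) - (a + q • v) = (p - q) • v := by module
  rw [h, norm_smul, Real.norm_eq_abs]

lemma mem_segment_affine {n : ℕ} (a v : EuclideanSpace ℝ (Fin n)) {p q r : ℝ}
    (h1 : p ≤ q) (h2 : q ≤ r) :
    a + q • v ∈ segment ℝ (a + p • v) (a + r • v) := by
  rcases eq_or_lt_of_le (h1.trans h2) with h | h
  · have hq : q = p := le_antisymm (h2.trans h.ge) h1
    subst hq
    exact left_mem_segment ℝ _ _
  · set θ := (q - p) / (r - p) with hθ
    have hrp : (0:ℝ) < r - p := by linarith
    have hsc : (1 - θ) * p + θ * r = q := by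
      field_simp [hθ]
      have hθr : θ * (r - p) = q - p := by rw [hθ]; exact div_mul_cancel₀ _ hrp.ne'
      linear_combination hθr
    refine ⟨1 - θ, θ, ?_, ?_, by ring, ?_⟩
    · have : θ ≤ 1 := by
        rw [hθ, div_le_one hrp]; linarith
      linarith
    · exact div_nonneg (by linarith) hrp.le
    · have key : (1 - θ) • (a + p • v) + θ • (a + r • v)
          = a + ((1 - θ) * p + θ * r) • v := by module
      rw [key, hsc]

lemma chord_exists {n : ℕ} {X : Set (EuclideanSpace ℝ (Fin n))}
    (hopen : IsOpen X) (hbdd : Bornology.IsBounded X)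
    {a b : EuclideanSpace ℝ (Fin n)} (ha : a ∈ X) (hb : b ∈ X) (hab : a ≠ b) :
    ∃ sm sp : ℝ, sm ≤ 0 ∧ 1 ≤ sp ∧ a + sm • (b - a) ∈ frontier X ∧
      a + sp • (b - a) ∈ frontier X := by
  set f : ℝ → EuclideanSpace ℝ (Fin n) := fun s => a + s • (b - a) with hf
  have hfc : Continuous f := by fun_prop
  set S : Set ℝ := f ⁻¹' X with hS
  have h0 : (0:ℝ) ∈ S := by simp [hS, hf, ha]
  have h1 : (1:ℝ) ∈ S := by simp [hS, hf, hb]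
  have hSopen : IsOpen S := hopen.preimage hfc
  have hv : (0:ℝ) < ‖b - a‖ := by
    rw [norm_pos_iff]; exact sub_ne_zero_of_ne (Ne.symm hab)
  obtain ⟨R, hR⟩ := hbdd.subset_ball 0
  have hSbdd : ∀ s ∈ S, |s| ≤ (R + ‖a‖) / ‖b - a‖ := by
    intro s hs
    have h2 : ‖f s‖ < R := by
      have := hR hs
      simpa [Metric.mem_ball, dist_eq_norm] using this
    have h3 : |s| * ‖b - a‖ - ‖a‖ ≤ ‖f s‖ := by
      have h4 : ‖(a + s • (b - a)) - a‖ ≤ ‖a + s • (b - a)‖ + ‖a‖ := norm_sub_le _ _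
      simp only [add_sub_cancel_left, norm_smul, Real.norm_eq_abs] at h4
      simp only [hf]
      linarith
    rw [le_div_iff₀ hv]
    linarith
  have hbdda : BddAbove S := ⟨(R + ‖a‖) / ‖b - a‖, fun s hs => (abs_le.mp (hSbdd s hs)).2⟩
  have hbddb : BddBelow S := ⟨-((R + ‖a‖) / ‖b - a‖), fun s hs => (abs_le.mp (hSbdd s hs)).1⟩
  have hsne : S.Nonempty := ⟨0, h0⟩
  refine ⟨sInf S, sSup S, csInf_le hbddb h0, le_csSup hbdda h1, ?_, ?_⟩
  · have hcl : sInf S ∈ closure S := (isGLB_csInf hsne hbddb).mem_closure hsne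
    have hfrt : f (sInf S) ∈ closure X := by
      have : f (sInf S) ∈ f '' closure S := ⟨_, hcl, rfl⟩
      have h2 : f '' closure S ⊆ closure (f '' S) := image_closure_subset_closure_image hfc
      have h3 : f '' S ⊆ X := fun x ⟨s, hs, he⟩ => he ▸ hs
      exact closure_mono h3 (h2 this)
    have hnot : f (sInf S) ∉ X := by
      intro hmem
      obtain ⟨ε, hε, hball⟩ := Metric.isOpen_iff.mp hSopen _ hmem
      have : sInf S - ε/2 ∈ S := hball (by
        rw [Metric.mem_ball, Real.dist_eq]
        have he : sInf S - ε/2 - sInf S = -(ε/2) := by ring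
        rw [he, abs_neg, abs_of_nonneg (by linarith)]; linarith)
      have := csInf_le hbddb this
      linarith
    rw [hopen.frontier_eq]
    exact ⟨hfrt, hnot⟩
  · have hcl : sSup S ∈ closure S := (isLUB_csSup hsne hbdda).mem_closure hsne
    have hfrt : f (sSup S) ∈ closure X := by
      have : f (sSup S) ∈ f '' closure S := ⟨_, hcl, rfl⟩
      have h2 : f '' closure S ⊆ closure (f '' S) := image_closure_subset_closure_image hfc
      have h3 : f '' S ⊆ X := fun x ⟨s, hs, he⟩ => he ▸ hs
      exact closure_mono h3 (h2 this)
    have hnot : f (sSup S) ∉ X := by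
      intro hmem
      obtain ⟨ε, hε, hball⟩ := Metric.isOpen_iff.mp hSopen _ hmem
      have : sSup S + ε/2 ∈ S := hball (by
        rw [Metric.mem_ball, Real.dist_eq]
        have he : sSup S + ε/2 - sSup S = ε/2 := by ring
        rw [he, abs_of_nonneg (by linarith)]; linarith)
      have := le_csSup hbdda this
      linarith
    rw [hopen.frontier_eq]
    exact ⟨hfrt, hnot⟩

lemma cross_ratio_le {u w sm sp m : ℝ} (hu0 : 0 < u) (huw : u < w) (hw1 : w < 1)
    (hsm : sm ≤ 0) (hsp : 1 ≤ sp) (hm : 0 < m) :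
    ((sp - u) * m * ((w - sm) * m)) / ((u - sm) * m * ((sp - w) * m))
      ≤ ((1 - u) * w) / (u * (1 - w)) := by
  have h1 : (0:ℝ) < u - sm := by linarith
  have h2 : (0:ℝ) < sp - w := by linarith
  have h3 : (0:ℝ) < sp - u := by linarith
  have h4 : (0:ℝ) < w - sm := by linarith
  have hd1 : (0:ℝ) < (u - sm) * m * ((sp - w) * m) :=
    mul_pos (mul_pos h1 hm) (mul_pos h2 hm)
  have hd2 : (0:ℝ) < u * (1 - w) := mul_pos hu0 (by linarith)
  rw [div_le_div_iff₀ hd1 hd2]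
  have e1 : (w - sm) * u ≤ w * (u - sm) := by nlinarith
  have e2 : (sp - u) * (1 - w) ≤ (1 - u) * (sp - w) := by nlinarith
  have e3 : (sp - u) * (1 - w) * ((w - sm) * u)
      ≤ (1 - u) * (sp - w) * (w * (u - sm)) :=
    mul_le_mul e2 e1 (mul_nonneg h4.le hu0.le)
      (mul_nonneg (by linarith) h2.le)
  nlinarith [mul_le_mul_of_nonneg_left e3 (mul_pos hm hm).le]

lemma main_bound {n : ℕ} {X : Set (EuclideanSpace ℝ (Fin n))}
    (hconv : Convex ℝ X) (hopen : IsOpen X) (hbdd : Bornology.IsBounded X)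
    {d : EuclideanSpace ℝ (Fin n) → EuclideanSpace ℝ (Fin n) → ℝ}
    (hd : IsHilbertMetric X d)
    {o : EuclideanSpace ℝ (Fin n)} (ho : o ∈ X)
    {α β : EuclideanSpace ℝ (Fin n)} (hαβ : α ≠ β)
    (hseg : segment ℝ α β ⊆ frontier X)
    {ξ η : EuclideanSpace ℝ (Fin n)}
    (hξ : ξ ∈ openSegment ℝ α β) (hη : η ∈ openSegment ℝ α β)
    (hlt : dist α ξ < dist α η) :
    ∀ x ∈ segment ℝ o ξ, x ≠ ξ →
      ∃ y ∈ segment ℝ o η, y ≠ η ∧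
        d x y ≤ Real.log ((dist ξ β * dist η α) / (dist ξ α * dist η β)) := by
  have hβα : β - α ≠ 0 := sub_ne_zero.mpr (Ne.symm hαβ)
  set c := ‖β - α‖ with hcdef
  have hc : 0 < c := norm_pos_iff.mpr hβα
  rw [openSegment_eq_image] at hξ hη
  obtain ⟨u, ⟨hu0, hu1⟩, hξeq⟩ := hξ
  obtain ⟨w, ⟨hw0, hw1⟩, hηeq⟩ := hη
  have hξa : ξ = α + u • (β - α) := by rw [← hξeq]; module
  have hηa : η = α + w • (β - α) := by rw [← hηeq]; module
  have dξα : dist ξ α = u * c := by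
    have h : ξ - α = u • (β - α) := by rw [hξa]; module
    rw [dist_eq_norm, h, norm_smul, Real.norm_eq_abs, abs_of_pos hu0]
  have dηα : dist η α = w * c := by
    have h : η - α = w • (β - α) := by rw [hηa]; module
    rw [dist_eq_norm, h, norm_smul, Real.norm_eq_abs, abs_of_pos hw0]
  have dξβ : dist ξ β = (1 - u) * c := by
    have h : ξ - β = (u - 1) • (β - α) := by rw [hξa]; module
    rw [dist_eq_norm, h, norm_smul, Real.norm_eq_abs,
      abs_of_neg (by linarith : u - 1 < 0)]
    ring
  have dηβ : dist η β = (1 - w) * c := by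
    have h : η - β = (w - 1) • (β - α) := by rw [hηa]; module
    rw [dist_eq_norm, h, norm_smul, Real.norm_eq_abs,
      abs_of_neg (by linarith : w - 1 < 0)]
    ring
  have huw : u < w := by
    rw [dist_comm α ξ, dist_comm α η, dξα, dηα] at hlt
    exact lt_of_mul_lt_mul_right hlt hc.le
  have hK : (dist ξ β * dist η α) / (dist ξ α * dist η β)
      = ((1 - u) * w) / (u * (1 - w)) := by
    rw [dξβ, dηα, dξα, dηβ, div_eq_div_iff
      (mul_pos (mul_pos hu0 hc) (mul_pos (by linarith : (0:ℝ) < 1 - w) hc)).ne'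
      (mul_pos hu0 (by linarith : (0:ℝ) < 1 - w)).ne']
    ring
  have hKpos : (1:ℝ) ≤ ((1 - u) * w) / (u * (1 - w)) := by
    rw [le_div_iff₀ (mul_pos hu0 (by linarith : (0:ℝ) < 1 - w))]
    nlinarith
  have hηF : η ∈ frontier X := hseg (by
    rw [← hηeq]
    exact ⟨1 - w, w, by linarith, hw0.le, by ring, rfl⟩)
  have hηnX : η ∉ X := by
    rw [hopen.frontier_eq] at hηF
    exact hηF.2
  have hξF : ξ ∈ frontier X := hseg (by
    rw [← hξeq]
    exact ⟨1 - u, u, by linarith, hu0.le, by ring, rfl⟩)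
  have hαcl : α ∈ closure X := frontier_subset_closure (hseg (left_mem_segment ℝ α β))
  have hβcl : β ∈ closure X := frontier_subset_closure (hseg (right_mem_segment ℝ α β))
  have hξcl : ξ ∈ closure X := frontier_subset_closure hξF
  have hηcl : η ∈ closure X := frontier_subset_closure hηF
  have hoI : o ∈ interior X := by rw [hopen.interior_eq]; exact ho
  intro x hx hxξ
  rw [segment_eq_image] at hx
  obtain ⟨t, ⟨ht0, ht1⟩, hxt⟩ := hx
  have ht1' : t < 1 := by
    rcases lt_or_eq_of_le ht1 with h | h
    · exact h
    · exfalso; apply hxξ; rw [← hxt]; simp [h]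
  rcases eq_or_lt_of_le ht0 with ht0' | ht0'
  · -- x = o
    have hxo : x = o := by rw [← hxt, ← ht0']; simp
    refine ⟨o, left_mem_segment ℝ o η, fun h => hηnX (h ▸ ho), ?_⟩
    rw [hxo, hd.1 o ho, hK]
    exact Real.log_nonneg hKpos
  · -- 0 < t
    obtain ⟨a, hadef⟩ : ∃ a' : EuclideanSpace ℝ (Fin n), a' = (1 - t) • o + t • α := ⟨_, rfl⟩
    obtain ⟨b, hbdef⟩ : ∃ b' : EuclideanSpace ℝ (Fin n), b' = (1 - t) • o + t • β := ⟨_, rfl⟩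
    have hba : b - a = t • (β - α) := by rw [hadef, hbdef]; module
    have hba0 : b - a ≠ 0 := by
      rw [hba]; exact smul_ne_zero (ne_of_gt ht0') hβα
    have hab : a ≠ b := fun h => hba0 (by rw [h, sub_self])
    have haX : a ∈ X := by
      have : a ∈ openSegment ℝ o α := ⟨1 - t, t, by linarith, ht0', by ring, hadef.symm⟩
      have := hconv.openSegment_interior_closure_subset_interior hoI hαcl this
      rwa [hopen.interior_eq] at this
    have hbX : b ∈ X := by
      have : b ∈ openSegment ℝ o β := ⟨1 - t, t, by linarith, ht0', by ring, hbdef.symm⟩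
      have := hconv.openSegment_interior_closure_subset_interior hoI hβcl this
      rwa [hopen.interior_eq] at this
    have hxa : x = a + u • (b - a) := by
      rw [← hxt, hξa, hba, hadef]; module
    obtain ⟨y, hydef⟩ : ∃ y' : EuclideanSpace ℝ (Fin n), y' = a + w • (b - a) := ⟨_, rfl⟩
    have hya : y = (1 - t) • o + t • η := by
      rw [hydef, hηa, hba, hadef]; module
    have hyX : y ∈ X := by
      have : y ∈ openSegment ℝ o η := ⟨1 - t, t, by linarith, ht0', by ring, hya.symm⟩
      have := hconv.openSegment_interior_closure_subset_interior hoI hηcl this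
      rwa [hopen.interior_eq] at this
    have hxX : x ∈ X := by
      have : x ∈ openSegment ℝ o ξ := ⟨1 - t, t, by linarith, ht0', by ring, hxt⟩
      have := hconv.openSegment_interior_closure_subset_interior hoI hξcl this
      rwa [hopen.interior_eq] at this
    have hxy : x ≠ y := by
      intro h
      rw [hxa, hydef] at h
      have : (u - w) • (b - a) = 0 := by
        have := sub_eq_zero_of_eq h
        rw [show a + u • (b - a) - (a + w • (b - a)) = (u - w) • (b - a) by module] at this
        exact this
      rcases smul_eq_zero.mp this with h' | h'
      · exact absurd (sub_eq_zero.mp h') (ne_of_lt huw)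
      · exact hba0 h'
    obtain ⟨sm, sp, hsm, hsp, hFm, hFp⟩ := chord_exists hopen hbdd haX hbX hab
    obtain ⟨m, hmdef⟩ : ∃ m' : ℝ, m' = ‖b - a‖ := ⟨_, rfl⟩
    have hm : 0 < m := hmdef ▸ norm_pos_iff.mpr hba0
    have hxseg : x ∈ segment ℝ (a + sm • (b - a)) y := by
      rw [hxa, hydef]
      exact mem_segment_affine a (b - a) (hsm.trans hu0.le) huw.le
    have hyseg : y ∈ segment ℝ x (a + sp • (b - a)) := by
      rw [hxa, hydef]
      exact mem_segment_affine a (b - a) huw.le (hw1.le.trans hsp)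
    have hdxy := hd.2 x hxX y hyX hxy _ hFm _ hFp hxseg hyseg
    have D1 : dist x (a + sp • (b - a)) = (sp - u) * m := by
      rw [hxa, dist_affine, ← hmdef]
      congr 1
      rw [abs_of_nonpos (by linarith)]; ring
    have D2 : dist y (a + sm • (b - a)) = (w - sm) * m := by
      rw [hydef, dist_affine, ← hmdef]
      congr 1
      rw [abs_of_nonneg (by linarith)]
    have D3 : dist x (a + sm • (b - a)) = (u - sm) * m := by
      rw [hxa, dist_affine, ← hmdef]
      congr 1
      rw [abs_of_nonneg (by linarith)]
    have D4 : dist y (a + sp • (b - a)) = (sp - w) * m := by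
      rw [hydef, dist_affine, ← hmdef]
      congr 1
      rw [abs_of_nonpos (by linarith)]; ring
    refine ⟨y, ?_, fun h => hηnX (h ▸ hyX), ?_⟩
    · rw [segment_eq_image]
      exact ⟨t, ⟨ht0, ht1⟩, hya.symm⟩
    · rw [hdxy, D1, D2, D3, D4, hK]
      have h1 : (0:ℝ) < u - sm := by linarith
      have h2 : (0:ℝ) < sp - w := by linarith
      have h3 : (0:ℝ) < sp - u := by linarith
      have h4 : (0:ℝ) < w - sm := by linarith
      exact Real.log_le_log
        (div_pos (mul_pos (mul_pos h3 hm) (mul_pos h4 hm))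
          (mul_pos (mul_pos h1 hm) (mul_pos h2 hm)))
        (cross_ratio_le hu0 huw hw1 hsm hsp hm)

theorem hilbert_boundary_segment_rays_bounded_distance
    {n : ℕ} (hn : 2 ≤ n) (X : Set (EuclideanSpace ℝ (Fin n)))
    (hne : X.Nonempty) (hconv : Convex ℝ X) (hopen : IsOpen X)
    (hbdd : Bornology.IsBounded X)
    (d : EuclideanSpace ℝ (Fin n) → EuclideanSpace ℝ (Fin n) → ℝ)
    (hd : IsHilbertMetric X d)
    (o : EuclideanSpace ℝ (Fin n)) (ho : o ∈ X)
    (α β : EuclideanSpace ℝ (Fin n)) (hαβ : α ≠ β)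
    (hseg : segment ℝ α β ⊆ frontier X)
    (ξ η : EuclideanSpace ℝ (Fin n)) (hξη : ξ ≠ η)
    (hξ : ξ ∈ openSegment ℝ α β) (hη : η ∈ openSegment ℝ α β) :
    (∃ K : ℝ, ∀ x ∈ segment ℝ o ξ, x ≠ ξ →
      ∃ y ∈ segment ℝ o η, y ≠ η ∧ d x y ≤ K) ∧
    (dist α ξ < dist α η →
      ∀ x ∈ segment ℝ o ξ, x ≠ ξ →
        ∃ y ∈ segment ℝ o η, y ≠ η ∧
          d x y ≤ Real.log ((dist ξ β * dist η α) / (dist ξ α * dist η β))) := by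
  refine ⟨?_, fun hlt => main_bound hconv hopen hbdd hd ho hαβ hseg hξ hη hlt⟩
  refine ⟨max (Real.log ((dist ξ β * dist η α) / (dist ξ α * dist η β)))
      (Real.log ((dist ξ α * dist η β) / (dist ξ β * dist η α))), ?_⟩
  have hβα : β - α ≠ 0 := sub_ne_zero.mpr (Ne.symm hαβ)
  have hc : 0 < ‖β - α‖ := norm_pos_iff.mpr hβα
  have hξ' := hξ
  have hη' := hη
  rw [openSegment_eq_image] at hξ' hη'
  obtain ⟨u, ⟨hu0, hu1⟩, hξeq⟩ := hξ'
  obtain ⟨w, ⟨hw0, hw1⟩, hηeq⟩ := hη'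
  have hξa : ξ = α + u • (β - α) := by rw [← hξeq]; module
  have hηa : η = α + w • (β - α) := by rw [← hηeq]; module
  have dξα : dist ξ α = u * ‖β - α‖ := by
    have h : ξ - α = u • (β - α) := by rw [hξa]; module
    rw [dist_eq_norm, h, norm_smul, Real.norm_eq_abs, abs_of_pos hu0]
  have dηα : dist η α = w * ‖β - α‖ := by
    have h : η - α = w • (β - α) := by rw [hηa]; module
    rw [dist_eq_norm, h, norm_smul, Real.norm_eq_abs, abs_of_pos hw0]
  have dξβ : dist ξ β = (1 - u) * ‖β - α‖ := by
    have h : ξ - β = (u - 1) • (β - α) := by rw [hξa]; module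
    rw [dist_eq_norm, h, norm_smul, Real.norm_eq_abs,
      abs_of_neg (by linarith : u - 1 < 0)]
    ring
  have dηβ : dist η β = (1 - w) * ‖β - α‖ := by
    have h : η - β = (w - 1) • (β - α) := by rw [hηa]; module
    rw [dist_eq_norm, h, norm_smul, Real.norm_eq_abs,
      abs_of_neg (by linarith : w - 1 < 0)]
    ring
  have huw : u ≠ w := by
    intro h
    exact hξη (by rw [← hξeq, ← hηeq, h])
  rcases lt_or_gt_of_ne huw with h | h
  · intro x hx hxξ
    have hlt : dist α ξ < dist α η := by
      rw [dist_comm α ξ, dist_comm α η, dξα, dηα]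
      exact mul_lt_mul_of_pos_right h hc
    obtain ⟨y, h1, h2, h3⟩ :=
      main_bound hconv hopen hbdd hd ho hαβ hseg hξ hη hlt x hx hxξ
    exact ⟨y, h1, h2, h3.trans (le_max_left _ _)⟩
  · intro x hx hxξ
    have hseg' : segment ℝ β α ⊆ frontier X := by rw [segment_symm]; exact hseg
    have hξs : ξ ∈ openSegment ℝ β α := by rw [openSegment_symm]; exact hξ
    have hηs : η ∈ openSegment ℝ β α := by rw [openSegment_symm]; exact hη
    have hlt : dist β ξ < dist β η := by
      rw [dist_comm β ξ, dist_comm β η, dξβ, dηβ]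
      exact mul_lt_mul_of_pos_right (by linarith) hc
    obtain ⟨y, h1, h2, h3⟩ :=
      main_bound hconv hopen hbdd hd ho (Ne.symm hαβ) hseg' hξs hηs hlt x hx hxξ
    exact ⟨y, h1, h2, h3.trans (le_max_right _ _)⟩
end
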